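/- arXiv:1303.5001 — 8 statements merged into one kernel-verified Lean document; each statement's English description precedes it below -/
import Mathlib

section
/- Let 0 < θ < ε ≤ 1 and let n be a positive integer with n ≥ (ε² − θ²)⁻¹. If A₁,…,Aₙ are measurable events in a probability space (Ω,Σ,μ) with μ(Aᵢ) ≥ ε for every i, then there exist indices i ≠ j such that μ(Aᵢ ∩ Aⱼ) ≥ θ². -/
open MeasureTheory

/-- If `0 < θ < ε ≤ 1`, `n ≥ (ε² − θ²)⁻¹` is a positive integer and
`A₁,…,Aₙ` are measurable events in a probability space with `μ(Aᵢ) ≥ ε` for every `i`,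
then there are `i ≠ j` with `μ(Aᵢ ∩ Aⱼ) ≥ θ²`. -/
theorem stmt_0 {Ω : Type*} [MeasurableSpace Ω] (μ : Measure Ω) [IsProbabilityMeasure μ]
    (θ ε : ℝ) (hθ : 0 < θ) (hθε : θ < ε) (hε : ε ≤ 1)
    (n : ℕ) (hn : 1 ≤ n) (hn' : (ε ^ 2 - θ ^ 2)⁻¹ ≤ (n : ℝ))
    (A : Fin n → Set Ω) (hmeas : ∀ i, MeasurableSet (A i))
    (hA : ∀ i, ε ≤ (μ (A i)).toReal) :
    ∃ i j : Fin n, i ≠ j ∧ θ ^ 2 ≤ (μ (A i ∩ A j)).toReal := by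
  by_contra hcon
  push_neg at hcon
  have hd : (0:ℝ) < ε ^ 2 - θ ^ 2 := by nlinarith
  have h4 : 1 ≤ (n : ℝ) * (ε ^ 2 - θ ^ 2) :=
    (div_le_iff₀ hd).mp (by simpa [one_div] using hn')
  have hnpos : (0:ℝ) < n := by exact_mod_cast hn
  -- the indicator functions
  set g : Fin n → Ω → ℝ := fun i => (A i).indicator (fun _ => (1:ℝ)) with hg
  have hind : ∀ i, Integrable (g i) μ := fun i => (integrable_const 1).indicator (hmeas i)
  have hind2 : ∀ i j, Integrable ((A i ∩ A j).indicator (fun _ => (1:ℝ))) μ :=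
    fun i j => (integrable_const 1).indicator ((hmeas i).inter (hmeas j))
  set X : Ω → ℝ := fun ω => ∑ i, g i ω with hX
  have hmem : MemLp X 2 μ := by
    rw [hX]
    exact memLp_finsetSum Finset.univ fun i _ => (memLp_const (1:ℝ)).indicator (hmeas i)
  -- first moment
  have hEX : ∫ ω, X ω ∂μ = ∑ i, (μ (A i)).toReal := by
    rw [hX, integral_finset_sum _ (fun i _ => hind i)]
    refine Finset.sum_congr rfl fun i _ => ?_
    rw [hg]
    rw [integral_indicator_const (1:ℝ) (hmeas i)]
    simp [Measure.real]
  -- second moment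
  have hsq : ∀ ω, X ω ^ 2 = ∑ i, ∑ j, (A i ∩ A j).indicator (fun _ => (1:ℝ)) ω := by
    intro ω
    rw [hX, sq, Finset.sum_mul_sum]
    refine Finset.sum_congr rfl fun i _ => Finset.sum_congr rfl fun j _ => ?_
    have := Set.inter_indicator_mul (fun _ : Ω => (1:ℝ)) (fun _ : Ω => (1:ℝ)) (s := A i) (t := A j) ω
    simp only [mul_one] at this
    simpa [hg] using this.symm
  have hEX2 : ∫ ω, X ω ^ 2 ∂μ = ∑ i, ∑ j, (μ (A i ∩ A j)).toReal := by
    simp_rw [hsq]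
    rw [integral_finset_sum _ (fun i _ => integrable_finset_sum _ (fun j _ => hind2 i j))]
    refine Finset.sum_congr rfl fun i _ => ?_
    rw [integral_finset_sum _ (fun j _ => hind2 i j)]
    refine Finset.sum_congr rfl fun j _ => ?_
    rw [integral_indicator_const (1:ℝ) ((hmeas i).inter (hmeas j))]
    simp [Measure.real]
  -- Cauchy–Schwarz via variance
  have hvar : (∫ ω, X ω ∂μ) ^ 2 ≤ ∫ ω, X ω ^ 2 ∂μ := by
    have h := ProbabilityTheory.variance_nonneg X μ
    rw [ProbabilityTheory.variance_eq_sub hmem] at h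
    have : (∫ ω, (X ^ 2) ω ∂μ) = ∫ ω, X ω ^ 2 ∂μ := by simp [Pi.pow_apply]
    simp only [this] at h
    linarith
  -- lower bound on first moment
  have hEXlb : (n : ℝ) * ε ≤ ∫ ω, X ω ∂μ := by
    rw [hEX]
    calc (n : ℝ) * ε = ∑ _i : Fin n, ε := by simp [mul_comm]
    _ ≤ ∑ i, (μ (A i)).toReal := Finset.sum_le_sum fun i _ => hA i
  -- upper bound on second moment
  have hEX2ub : ∫ ω, X ω ^ 2 ∂μ ≤ (n : ℝ) + ((n : ℝ) ^ 2 - n) * θ ^ 2 := by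
    rw [hEX2]
    have hbound : ∀ i j : Fin n, (μ (A i ∩ A j)).toReal ≤
        θ ^ 2 + if i = j then 1 - θ ^ 2 else 0 := by
      intro i j
      by_cases hij : i = j
      · subst hij
        rw [if_pos rfl]
        have h1 : (μ (A i ∩ A i)).toReal ≤ 1 := by
          have := ENNReal.toReal_mono ENNReal.one_ne_top (prob_le_one (μ := μ) (s := A i ∩ A i))
          simpa using this
        linarith
      · simp only [if_neg hij]
        linarith [le_of_lt (hcon i j hij)]
    calc ∑ i, ∑ j, (μ (A i ∩ A j)).toReal
        ≤ ∑ i : Fin n, ∑ j : Fin n, (θ ^ 2 + if i = j then 1 - θ ^ 2 else 0) :=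
          Finset.sum_le_sum fun i _ => Finset.sum_le_sum fun j _ => hbound i j
      _ = (n : ℝ) + ((n : ℝ) ^ 2 - n) * θ ^ 2 := by
          simp [Finset.sum_add_distrib, Finset.sum_ite_eq, Finset.mem_univ]
          ring
  have hkey : ((n : ℝ) * ε) ^ 2 ≤ (n : ℝ) + ((n : ℝ) ^ 2 - n) * θ ^ 2 := by
    calc ((n : ℝ) * ε) ^ 2 ≤ (∫ ω, X ω ∂μ) ^ 2 := by
          apply pow_le_pow_left₀ (by nlinarith) hEXlb
      _ ≤ ∫ ω, X ω ^ 2 ∂μ := hvar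
      _ ≤ _ := hEX2ub
  nlinarith [mul_le_mul_of_nonneg_left h4 hnpos.le, sq_nonneg θ]
end

section
/- Let k ≥ 2, let 𝓛 be a finite alphabet disjoint from [k], and let 𝐰 = (w, w₀,…,w_{n−1}) be an n-dimensional Carlson–Simpson sequence over k. For every type τ ∈ 𝒯(𝓛) of length m ≤ n, the set 𝐰(k,𝓛,τ) of elements of 𝐰(k,𝓛) of type τ equals {𝐳(τ) : 𝐳 ∈ Subseq_m(𝐰)}, the set of images of τ under all m-dimensional Carlson–Simpson subsequences of 𝐰. -/
/-- Substitution of the letter `a ∈ [k]` for the variable (encoded as `none`)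
in a variable word over `[k]`. -/
def subst (k : ℕ) (vw : List (Option (Fin k))) (a : Fin k) : List (Fin k) :=
  vw.map fun l => l.getD a

/-- A left variable word over `[k]`: its leftmost letter is the variable. -/
def IsLeftVar (k : ℕ) (vw : List (Option (Fin k))) : Prop := ∃ t, vw = none :: t

/-- `w⌢w₀(a₀)⌢…⌢w_{n−1}(a_{n−1})` for a Carlson–Simpson sequence `(w, ws)` and a word
of choices `as = (a₀,…,a_{n−1})` (with `n = as.length`). -/
def csApply (k : ℕ) (w : List (Fin k)) (ws : List (List (Option (Fin k))))
    (as : List (Fin k)) : List (Fin k) :=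
  w ++ (List.zipWith (subst k) ws as).flatten

/-- The Carlson–Simpson tree generated by the Carlson–Simpson sequence `(w, ws)`. -/
def genTree (k : ℕ) (w : List (Fin k)) (ws : List (List (Option (Fin k)))) :
    Set (List (Fin k)) :=
  {u | ∃ as : List (Fin k), as.length ≤ ws.length ∧ u = csApply k w ws as}

/-- Substitution of a letter `b ∈ [k] ∪ 𝓛` for the variable in a variable word over `[k]`,
yielding a word over `[k] ∪ 𝓛` (letters of `[k]` are `Sum.inl`, letters of `𝓛` are `Sum.inr`). -/
def substG (k : ℕ) {L : Type*} (vw : List (Option (Fin k))) (b : Fin k ⊕ L) :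
    List (Fin k ⊕ L) :=
  vw.map fun l => match l with | some a => Sum.inl a | none => b

/-- `𝐰(v) = w⌢w₀(a₀)⌢…⌢w_{m−1}(a_{m−1})` for `v = (a₀,…,a_{m−1})` a word over `[k] ∪ 𝓛`. -/
def applyG (k : ℕ) {L : Type*} (w : List (Fin k)) (ws : List (List (Option (Fin k))))
    (v : List (Fin k ⊕ L)) : List (Fin k ⊕ L) :=
  w.map Sum.inl ++ (List.zipWith (substG k) ws v).flatten

/-- The type of a word over `[k] ∪ 𝓛`: erase the letters of `[k]` and collapse runs of
equal letters of `𝓛` to singletons. (Pure `[k]`-words get the empty list.) -/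
def typeOf (k : ℕ) {L : Type*} [DecidableEq L] (u : List (Fin k ⊕ L)) : List L :=
  (u.filterMap Sum.getRight?).destutter (· ≠ ·)

/-- Substitution of `o ∈ [k] ∪ {x}` for the variable in a variable word over `[k]`. -/
def substO (k : ℕ) (vw : List (Option (Fin k))) (o : Option (Fin k)) :
    List (Option (Fin k)) :=
  vw.map fun l => match l with | none => o | some b => some b

/-- `(v, vs)` is a (`vs.length`-dimensional) Carlson–Simpson subsequence of `(w, ws)`:
there are letters `(aᵢ)` in `[k] ∪ {x}` and a strictly increasing sequence
`n₀ < … < n_m ≤ dim 𝐰` with `a_{nᵢ} = x`, `a_j ∈ [k]` for `j < n₀`,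
`v = w⌢w₀(a₀)⌢…⌢w_{n₀−1}(a_{n₀−1})` and
`vᵢ = w_{nᵢ}(a_{nᵢ})⌢…⌢w_{n_{i+1}−1}(a_{n_{i+1}−1})` (conditions (C1)–(C3)). -/
def IsCSSubseq (k : ℕ) (w : List (Fin k)) (ws : List (List (Option (Fin k))))
    (v : List (Fin k)) (vs : List (List (Option (Fin k)))) : Prop :=
  ∃ (a : ℕ → Option (Fin k)) (nf : ℕ → ℕ),
    StrictMonoOn nf (Set.Iic vs.length) ∧
    nf vs.length ≤ ws.length ∧
    (∀ i < vs.length, a (nf i) = none) ∧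
    (∀ j < nf 0, a j ≠ none) ∧
    v.map some = w.map some ++
      ((List.range (nf 0)).map fun j => substO k (ws.getD j []) (a j)).flatten ∧
    (∀ i < vs.length,
      vs.getD i [] =
        ((List.Ico (nf i) (nf (i + 1))).map fun j => substO k (ws.getD j []) (a j)).flatten)

section Destutter
variable {L : Type*} [DecidableEq L]

lemma aux_destutter'_rep_self (t : L) (Y : List L) :
    ∀ n, (List.replicate n t ++ Y).destutter' (· ≠ ·) t = Y.destutter' (· ≠ ·) t := by
  intro n
  induction n with
  | zero => rfl
  | succ n ih =>
    rw [List.replicate_succ, List.cons_append,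
      List.destutter'_cons_neg (h := by simp), ih]

lemma aux_destutter'_head {R : L → L → Prop} [DecidableRel R] :
    ∀ (l : List L) (a : L), ∃ r, l.destutter' R a = a :: r := by
  intro l
  induction l with
  | nil => exact fun a => ⟨[], rfl⟩
  | cons b l ih =>
    intro a
    by_cases h : R a b
    · exact ⟨l.destutter' R b, List.destutter'_cons_pos l (h := h)⟩
    · obtain ⟨r, hr⟩ := ih a
      exact ⟨r, by rw [List.destutter'_cons_neg (h := h), hr]⟩

lemma aux_flat2' {l : List L} {rs : List (List L)}
    (h : List.Forall₂ (fun t r => ∃ n, r = List.replicate (n + 1) t) l rs) :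
    ∀ a, rs.flatten.destutter' (· ≠ ·) a = l.destutter' (· ≠ ·) a := by
  induction h with
  | nil => intro a; rfl
  | @cons t r l' rs' ht _ ih =>
    intro a
    obtain ⟨n, rfl⟩ := ht
    rw [List.flatten_cons, List.replicate_succ, List.cons_append]
    by_cases hat : a = t
    · subst hat
      rw [List.destutter'_cons_neg (h := by simp),
        aux_destutter'_rep_self, ih,
        List.destutter'_cons_neg (h := by simp)]
    · rw [List.destutter'_cons_pos (h := show a ≠ t from hat),
        aux_destutter'_rep_self, ih,
        List.destutter'_cons_pos (h := show a ≠ t from hat)]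

lemma aux_flat2 {l : List L} {rs : List (List L)}
    (h : List.Forall₂ (fun t r => ∃ n, r = List.replicate (n + 1) t) l rs) :
    rs.flatten.destutter (· ≠ ·) = l.destutter (· ≠ ·) := by
  cases h with
  | nil => rfl
  | @cons t r l' rs' ht hrest =>
    obtain ⟨n, rfl⟩ := ht
    rw [List.flatten_cons, List.replicate_succ, List.cons_append,
      List.destutter_cons', aux_destutter'_rep_self, aux_flat2' hrest,
      List.destutter_cons']

end Destutter

section Aux

lemma aux_zipWith {α β γ : Type*} (f : α → β → γ) (d : α) (d' : β) :
    ∀ (l' : List β) (l : List α), l'.length ≤ l.length →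
      List.zipWith f l l' = (List.range l'.length).map fun j => f (l.getD j d) (l'.getD j d') := by
  intro l'
  induction l' with
  | nil => intro l _; simp
  | cons b l'' ih =>
    intro l hl
    cases l with
    | nil => simp at hl
    | cons x l2 =>
      simp only [List.length_cons] at hl ⊢
      rw [List.range_succ_eq_map, List.map_cons, List.map_map]
      simp only [List.getD_cons_zero, List.zipWith_cons_cons]
      congr 1
      · rw [ih l2 (by omega)]
        apply List.map_congr_left
        intro j _
        simp [Function.comp, Nat.succ_eq_add_one, List.getD_cons_succ]

lemma aux_step_mono (nf : ℕ → ℕ) (m : ℕ) (h : ∀ i < m, nf i ≤ nf (i + 1)) :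
    ∀ b ≤ m, ∀ a ≤ b, nf a ≤ nf b := by
  intro b
  induction b with
  | zero => intro _ a ha; interval_cases a; exact le_rfl
  | succ b ih =>
    intro hb a ha
    rcases Nat.eq_or_lt_of_le ha with rfl | hlt
    · exact le_rfl
    · exact le_trans (ih (by omega) a (by omega)) (h b (by omega))

lemma aux_Ico_flatten (nf : ℕ → ℕ) :
    ∀ m : ℕ, (∀ i < m, nf i ≤ nf (i + 1)) →
      ((List.range m).map fun i => List.Ico (nf i) (nf (i + 1))).flatten = List.Ico (nf 0) (nf m) := by
  intro m
  induction m with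
  | zero => intro _; simp [List.Ico.self_empty]
  | succ m ih =>
    intro h
    rw [List.range_succ, List.map_append, List.flatten_append, ih (fun i hi => h i (by omega))]
    simp only [List.map_cons, List.map_nil, List.flatten_cons, List.flatten_nil, List.append_nil]
    exact List.Ico.append_consecutive (aux_step_mono nf (m + 1) h m (by omega) 0 (by omega))
      (h m (by omega))

lemma aux_getD_map_lt {α β : Type*} (f : α → β) (l : List α) {i : ℕ} (h : i < l.length)
    (d : β) (d' : α) : (l.map f).getD i d = f (l.getD i d') := by
  rw [List.getD_eq_getElem _ _ (by simpa using h), List.getElem_map,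
    List.getD_eq_getElem _ _ h]

lemma aux_getD_range_map {α : Type*} (f : ℕ → α) {m i : ℕ} (h : i < m) (d : α) :
    ((List.range m).map f).getD i d = f i := by
  rw [aux_getD_map_lt f _ (by simpa using h) d 0, List.getD_eq_getElem _ _ (by simpa using h),
    List.getElem_range]

end Aux

section Subst

lemma aux_subst_map_some (k : ℕ) (vw : List (Option (Fin k))) (c : Fin k) :
    (subst k vw c).map some = substO k vw (some c) := by
  unfold subst substO
  rw [List.map_map]
  congr 1
  funext x
  cases x <;> rfl

lemma aux_substO_map_elim (k : ℕ) {L : Type*} (vw : List (Option (Fin k)))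
    (o : Option (Fin k)) (x : Fin k ⊕ L) :
    (substO k vw o).map (fun o' => o'.elim x Sum.inl) = substG k vw (o.elim x Sum.inl) := by
  unfold substO substG
  rw [List.map_map]
  congr 1
  funext l
  cases l <;> cases o <;> rfl

lemma aux_substG_substO (k : ℕ) {L : Type*} (vw : List (Option (Fin k)))
    (o : Option (Fin k)) (b : Fin k ⊕ L) :
    substG k (substO k vw o) b = substG k vw (o.elim b Sum.inl) := by
  unfold substO substG
  rw [List.map_map]
  congr 1
  funext l
  cases l <;> cases o <;> rfl

lemma aux_substG_flatten (k : ℕ) {L : Type*} (ls : List (List (Option (Fin k))))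
    (b : Fin k ⊕ L) :
    substG k ls.flatten b = (ls.map (fun vw => substG k vw b)).flatten := by
  unfold substG
  rw [List.map_flatten]

lemma aux_filterMap_substG_inl (k : ℕ) {L : Type*} (vw : List (Option (Fin k))) (c : Fin k) :
    (substG k vw (Sum.inl c : Fin k ⊕ L)).filterMap Sum.getRight? = [] := by
  unfold substG
  rw [List.filterMap_map, List.filterMap_eq_nil_iff]
  intro x _
  cases x <;> rfl

lemma aux_filterMap_substG_inr (k : ℕ) {L : Type*} (vw : List (Option (Fin k))) (t : L)
    (hvw : IsLeftVar k vw) :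
    ∃ n, (substG k vw (Sum.inr t)).filterMap Sum.getRight? = List.replicate (n + 1) t := by
  have hall : ∀ x ∈ (substG k vw (Sum.inr t : Fin k ⊕ L)).filterMap Sum.getRight?, x = t := by
    intro x hx
    rw [List.mem_filterMap] at hx
    obtain ⟨y, hy, hxy⟩ := hx
    unfold substG at hy
    rw [List.mem_map] at hy
    obtain ⟨o, _, rfl⟩ := hy
    cases o with
    | some a => simp at hxy
    | none => simpa using hxy.symm
  have hmem : t ∈ (substG k vw (Sum.inr t : Fin k ⊕ L)).filterMap Sum.getRight? := by
    obtain ⟨t', rfl⟩ := hvw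
    unfold substG
    simp
  have hrep := List.eq_replicate_of_mem hall
  have hpos : 0 < ((substG k vw (Sum.inr t : Fin k ⊕ L)).filterMap Sum.getRight?).length :=
    List.length_pos_iff.2 (List.ne_nil_of_mem hmem)
  obtain ⟨n, hn⟩ : ∃ n, ((substG k vw (Sum.inr t : Fin k ⊕ L)).filterMap Sum.getRight?).length
      = n + 1 := ⟨((substG k vw (Sum.inr t : Fin k ⊕ L)).filterMap Sum.getRight?).length - 1, by omega⟩
  exact ⟨n, hn ▸ hrep⟩

lemma aux_runs (k : ℕ) {L : Type*} [DecidableEq L] :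
    ∀ (v : List (Fin k ⊕ L)) (ws : List (List (Option (Fin k)))),
      v.length ≤ ws.length → (∀ vw ∈ ws, IsLeftVar k vw) →
      ∃ rs : List (List L),
        (List.zipWith (substG k) ws v).flatten.filterMap Sum.getRight? = rs.flatten ∧
        List.Forall₂ (fun t r => ∃ n, r = List.replicate (n + 1) t)
          (v.filterMap Sum.getRight?) rs := by
  intro v
  induction v with
  | nil => intro ws _ _; exact ⟨[], by simp, by simp⟩
  | cons b v' ih =>
    intro ws hlen hleft
    cases ws with
    | nil => simp at hlen
    | cons vw ws' =>
      simp only [List.length_cons] at hlen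
      obtain ⟨rs', h1, h2⟩ := ih ws' (by omega) (fun x hx => hleft x (List.mem_cons_of_mem _ hx))
      cases b with
      | inl c =>
        refine ⟨rs', ?_, ?_⟩
        · rw [List.zipWith_cons_cons, List.flatten_cons, List.filterMap_append,
            aux_filterMap_substG_inl, List.nil_append, h1]
        · exact h2
      | inr t =>
        obtain ⟨n, hn⟩ := aux_filterMap_substG_inr k vw t (hleft vw List.mem_cons_self)
        refine ⟨List.replicate (n + 1) t :: rs', ?_, ?_⟩
        · rw [List.zipWith_cons_cons, List.flatten_cons, List.filterMap_append, hn, h1,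
            List.flatten_cons]
        · rw [show (Sum.inr t :: v' : List (Fin k ⊕ L)).filterMap Sum.getRight?
              = t :: v'.filterMap Sum.getRight? by simp]
          exact List.Forall₂.cons ⟨n, rfl⟩ h2

lemma aux_type (k : ℕ) {L : Type*} [DecidableEq L] (w : List (Fin k))
    (ws : List (List (Option (Fin k)))) (v : List (Fin k ⊕ L))
    (h : v.length ≤ ws.length) (hleft : ∀ vw ∈ ws, IsLeftVar k vw) :
    typeOf k (applyG k w ws v) = (v.filterMap Sum.getRight?).destutter (· ≠ ·) := by
  obtain ⟨rs, h1, h2⟩ := aux_runs k v ws h hleft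
  unfold typeOf applyG
  rw [List.filterMap_append, h1, show (w.map Sum.inl : List (Fin k ⊕ L)).filterMap Sum.getRight? = []
    by rw [List.filterMap_map, List.filterMap_eq_nil_iff]; intro a _; rfl,
    List.nil_append, aux_flat2 h2]

end Subst

lemma aux_applyE (k : ℕ) {L : Type*} (w : List (Fin k)) (ws : List (List (Option (Fin k))))
    (τ : List L) (t₀ : L) (dv : Fin k ⊕ L) (a : ℕ → Option (Fin k)) (nf : ℕ → ℕ)
    (v : List (Fin k ⊕ L)) (z : List (Fin k)) (zs : List (List (Option (Fin k))))
    (hlen : nf τ.length ≤ ws.length)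
    (hmono : ∀ i < τ.length, nf i ≤ nf (i + 1))
    (hvlen : v.length = nf τ.length)
    (hv1 : ∀ j < nf 0, v.getD j dv = (a j).elim (Sum.inr t₀) Sum.inl)
    (hv2 : ∀ i < τ.length, ∀ j, nf i ≤ j → j < nf (i + 1) →
      v.getD j dv = (a j).elim (Sum.inr (τ.getD i t₀)) Sum.inl)
    (hz : z.map some = w.map some ++
      ((List.range (nf 0)).map fun j => substO k (ws.getD j []) (a j)).flatten)
    (hzslen : zs.length = τ.length)
    (hzsi : ∀ i < τ.length, zs.getD i [] =
      ((List.Ico (nf i) (nf (i + 1))).map fun j => substO k (ws.getD j []) (a j)).flatten) :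
    applyG k z zs (τ.map Sum.inr) = applyG k w ws v := by
  have hnf0m : nf 0 ≤ nf τ.length :=
    aux_step_mono nf τ.length hmono τ.length le_rfl 0 (Nat.zero_le _)
  -- Step A : the initial word
  have hA : z.map Sum.inl = w.map (Sum.inl : Fin k → Fin k ⊕ L) ++
      ((List.range (nf 0)).map fun j => substG k (ws.getD j []) (v.getD j dv)).flatten := by
    have h1 : z.map (Sum.inl : Fin k → Fin k ⊕ L) =
        (z.map some).map (fun o' => o'.elim (Sum.inr t₀ : Fin k ⊕ L) Sum.inl) := by
      rw [List.map_map]; rfl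
    rw [h1, hz, List.map_append, List.map_map, List.map_flatten, List.map_map]
    congr 1
    congr 1
    apply List.map_congr_left
    intro j hj
    rw [List.mem_range] at hj
    show (substO k (ws.getD j []) (a j)).map (fun o' => o'.elim (Sum.inr t₀) Sum.inl) = _
    rw [aux_substO_map_elim, ← hv1 j hj]
  -- Step B : the flattened part of applyG z zs
  have hB : (List.zipWith (substG k) zs (τ.map Sum.inr)).flatten =
      ((List.Ico (nf 0) (nf τ.length)).map fun j =>
        substG k (ws.getD j []) (v.getD j dv)).flatten := by
    rw [aux_zipWith (substG k) [] (Sum.inr t₀) (τ.map Sum.inr) zs (by simp [hzslen])]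
    simp only [List.length_map]
    have hcong : ∀ i ∈ List.range τ.length,
        substG k (zs.getD i []) ((τ.map Sum.inr).getD i (Sum.inr t₀)) =
        ((List.Ico (nf i) (nf (i + 1))).map fun j =>
          substG k (ws.getD j []) (v.getD j dv)).flatten := by
      intro i hi
      rw [List.mem_range] at hi
      rw [aux_getD_map_lt Sum.inr τ hi _ t₀, hzsi i hi, aux_substG_flatten, List.map_map]
      congr 1
      apply List.map_congr_left
      intro j hj
      rw [List.Ico.mem] at hj
      show substG k (substO k (ws.getD j []) (a j)) (Sum.inr (τ.getD i t₀)) = _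
      rw [aux_substG_substO, ← hv2 i hi j hj.1 hj.2]
    rw [List.map_congr_left hcong]
    rw [show ((List.range τ.length).map fun i =>
          ((List.Ico (nf i) (nf (i + 1))).map fun j =>
            substG k (ws.getD j []) (v.getD j dv)).flatten)
        = (((List.range τ.length).map fun i =>
          ((List.Ico (nf i) (nf (i + 1))).map fun j =>
            substG k (ws.getD j []) (v.getD j dv)))).map List.flatten by rw [List.map_map]; rfl,
      ← List.flatten_flatten]
    congr 1
    rw [show ((List.range τ.length).map fun i =>
          (List.Ico (nf i) (nf (i + 1))).map fun j => substG k (ws.getD j []) (v.getD j dv))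
        = ((List.range τ.length).map fun i => List.Ico (nf i) (nf (i + 1))).map
            (List.map fun j => substG k (ws.getD j []) (v.getD j dv)) by rw [List.map_map]; rfl,
      ← List.map_flatten, aux_Ico_flatten nf τ.length hmono]
  show z.map Sum.inl ++ (List.zipWith (substG k) zs (τ.map Sum.inr)).flatten = _
  rw [hA, hB, List.append_assoc]
  show _ = w.map Sum.inl ++ (List.zipWith (substG k) ws v).flatten
  congr 1
  rw [aux_zipWith (substG k) [] dv v ws (hvlen ▸ hlen), hvlen,
    ← List.Ico.zero_bot (nf τ.length),
    ← List.Ico.append_consecutive (Nat.zero_le _) hnf0m, List.map_append,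
    List.flatten_append, List.Ico.zero_bot]

lemma aux_fwd_type (k : ℕ) {L : Type*} [DecidableEq L] (τ : List L) (t₀ : L)
    (a : ℕ → Option (Fin k)) (nf : ℕ → ℕ) (idx : ℕ → ℕ)
    (hidx : ∀ i < τ.length, ∀ j, nf i ≤ j → j < nf (i + 1) → idx j = i)
    (hmono : ∀ i < τ.length, nf i ≤ nf (i + 1))
    (hstrict : ∀ i < τ.length, nf i < nf (i + 1))
    (ha : ∀ i < τ.length, a (nf i) = none)
    (ha0 : ∀ j < nf 0, a j ≠ none)
    (hchain : τ.Chain' (· ≠ ·)) :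
    (((List.range (nf τ.length)).map fun j =>
        (a j).elim (Sum.inr (τ.getD (idx j) t₀)) (Sum.inl : Fin k → Fin k ⊕ L)).filterMap
      Sum.getRight?).destutter (· ≠ ·) = τ := by
  set V : ℕ → Fin k ⊕ L := fun j => (a j).elim (Sum.inr (τ.getD (idx j) t₀)) Sum.inl with hV
  have hnf0m : nf 0 ≤ nf τ.length :=
    aux_step_mono nf τ.length hmono τ.length le_rfl 0 (Nat.zero_le _)
  rw [List.filterMap_map, ← List.Ico.zero_bot (nf τ.length),
    ← List.Ico.append_consecutive (Nat.zero_le (nf 0)) hnf0m, List.filterMap_append]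
  have h1 : (List.Ico 0 (nf 0)).filterMap (Sum.getRight? ∘ V) = [] := by
    rw [List.filterMap_eq_nil_iff]
    intro j hj
    rw [List.Ico.mem] at hj
    obtain ⟨c, hc⟩ := Option.ne_none_iff_exists'.1 (ha0 j hj.2)
    show Sum.getRight? (V j) = none
    rw [hV]; simp only [hc]; rfl
  rw [h1, List.nil_append, ← aux_Ico_flatten nf τ.length hmono, List.filterMap_flatten,
    List.map_map]
  have hforall : List.Forall₂ (fun t r => ∃ n, r = List.replicate (n + 1) t) τ
      ((List.range τ.length).map
        ((List.filterMap (Sum.getRight? ∘ V)) ∘ fun i => List.Ico (nf i) (nf (i + 1)))) := by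
    rw [List.forall₂_iff_get]
    constructor
    · simp
    · intro i h₁ h₂
      have hi : i < τ.length := h₁
      have hget : ((List.range τ.length).map
          ((List.filterMap (Sum.getRight? ∘ V)) ∘ fun i => List.Ico (nf i) (nf (i + 1)))).get
            ⟨i, h₂⟩ = (List.Ico (nf i) (nf (i + 1))).filterMap (Sum.getRight? ∘ V) := by
        rw [List.get_eq_getElem, List.getElem_map, List.getElem_range]
        rfl
      rw [hget]
      have hτget : τ.get ⟨i, h₁⟩ = τ.getD i t₀ := by
        rw [List.get_eq_getElem, List.getD_eq_getElem _ _ hi]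
      have hall : ∀ x ∈ (List.Ico (nf i) (nf (i + 1))).filterMap (Sum.getRight? ∘ V),
          x = τ.get ⟨i, h₁⟩ := by
        intro x hx
        rw [List.mem_filterMap] at hx
        obtain ⟨j, hjmem, hjx⟩ := hx
        rw [List.Ico.mem] at hjmem
        rcases haj : a j with _ | c
        · have : V j = Sum.inr (τ.getD (idx j) t₀) := by rw [hV]; simp [haj]
          rw [Function.comp_apply, this] at hjx
          simp only [Sum.getRight?] at hjx
          rw [hτget]
          have := hidx i hi j hjmem.1 hjmem.2
          rw [this] at hjx
          exact (Option.some_inj.1 hjx).symm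
        · have : V j = Sum.inl c := by rw [hV]; simp [haj]
          rw [Function.comp_apply, this] at hjx
          simp at hjx
      have hmem : τ.get ⟨i, h₁⟩ ∈
          (List.Ico (nf i) (nf (i + 1))).filterMap (Sum.getRight? ∘ V) := by
        rw [List.mem_filterMap]
        refine ⟨nf i, List.Ico.mem.2 ⟨le_rfl, hstrict i hi⟩, ?_⟩
        have : V (nf i) = Sum.inr (τ.getD (idx (nf i)) t₀) := by rw [hV]; simp [ha i hi]
        rw [Function.comp_apply, this, hidx i hi (nf i) le_rfl (hstrict i hi), hτget]
        rfl
      have hrep := List.eq_replicate_of_mem hall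
      have hpos : 0 < ((List.Ico (nf i) (nf (i + 1))).filterMap (Sum.getRight? ∘ V)).length :=
        List.length_pos_iff.2 (List.ne_nil_of_mem hmem)
      obtain ⟨n, hn⟩ : ∃ n,
          ((List.Ico (nf i) (nf (i + 1))).filterMap (Sum.getRight? ∘ V)).length = n + 1 :=
        ⟨((List.Ico (nf i) (nf (i + 1))).filterMap (Sum.getRight? ∘ V)).length - 1, by omega⟩
      exact ⟨n, hn ▸ hrep⟩
  rw [aux_flat2 hforall]; exact List.destutter_of_isChain _ _ hchain

lemma aux_exists_runs {α L : Type*} [DecidableEq L] (d : α ⊕ L) :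
    ∀ v : List (α ⊕ L), ∃ P : List ℕ,
      P.length = ((v.filterMap Sum.getRight?).destutter (· ≠ ·)).length ∧
      (P ++ [v.length]).Chain' (· < ·) ∧
      (∀ j < (P ++ [v.length]).getD 0 0, (v.getD j d).isLeft = true) ∧
      (∀ i < P.length, ∃ t : L, v.getD ((P ++ [v.length]).getD i 0) d = Sum.inr t) ∧
      (∀ i < P.length, ∀ j, (P ++ [v.length]).getD i 0 ≤ j →
        j < (P ++ [v.length]).getD (i + 1) 0 →
        ∀ t : L, v.getD j d = Sum.inr t →
          ((v.filterMap Sum.getRight?).destutter (· ≠ ·)).getD i t = t) := by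
  intro v
  induction v with
  | nil =>
    refine ⟨[], by simp, List.IsChain.singleton _, ?_, by simp, by simp⟩
    intro j hj; simp at hj
  | cons b v ih =>
    obtain ⟨P, hPlen, hPchain, hP0, hPinr, hPrun⟩ := ih
    cases b with
    | inl c =>
      have hfm : ((Sum.inl c : α ⊕ L) :: v).filterMap Sum.getRight?
          = v.filterMap Sum.getRight? := rfl
      have hQ : P.map (· + 1) ++ [((Sum.inl c : α ⊕ L) :: v).length]
          = (P ++ [v.length]).map (· + 1) := by simp
      have hQget : ∀ i ≤ P.length,
          ((P ++ [v.length]).map (· + 1)).getD i 0 = (P ++ [v.length]).getD i 0 + 1 := by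
        intro i hi
        exact aux_getD_map_lt _ _ (by simp; omega) 0 0
      refine ⟨P.map (· + 1), ?_, ?_, ?_, ?_, ?_⟩
      · rw [hfm]; simpa using hPlen
      · rw [hQ, List.Chain', List.isChain_map]
        exact hPchain.imp (fun h => by omega)
      · intro j hj
        rw [hQ, hQget 0 (by omega)] at hj
        cases j with
        | zero => rfl
        | succ j' =>
          rw [List.getD_cons_succ]
          exact hP0 j' (by omega)
      · intro i hi
        rw [List.length_map] at hi
        rw [hQ, hQget i (by omega), List.getD_cons_succ]
        exact hPinr i hi
      · intro i hi j hj1 hj2 t ht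
        rw [List.length_map] at hi
        rw [hQ, hQget i (by omega)] at hj1
        rw [hQ, hQget (i + 1) (by omega)] at hj2
        obtain ⟨j', rfl⟩ : ∃ j', j = j' + 1 := ⟨j - 1, by omega⟩
        rw [List.getD_cons_succ] at ht
        rw [hfm]
        exact hPrun i hi j' (by omega) (by omega) t ht
    | inr t =>
      have hfm : ((Sum.inr t : α ⊕ L) :: v).filterMap Sum.getRight?
          = t :: v.filterMap Sum.getRight? := by simp
      rcases hX : v.filterMap Sum.getRight? with _ | ⟨t', X''⟩
      · -- no inr letters in v
        have hnone : ∀ j < v.length, ∀ t'' : L, ¬ v.getD j d = Sum.inr t'' := by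
          intro j hj t'' hcon
          have hmem : v.getD j d ∈ v := by
            rw [List.getD_eq_getElem _ _ hj]; exact List.getElem_mem _
          have h2 := List.filterMap_eq_nil_iff.1 hX _ hmem
          rw [hcon] at h2
          simp [Sum.getRight?] at h2
        refine ⟨[0], ?_, ?_, ?_, ?_, ?_⟩
        · rw [hfm, hX]; simp
        · simp only [List.cons_append, List.nil_append, List.length_cons]
          rw [List.Chain', List.isChain_cons]
          exact ⟨fun y hy => by simp at hy; omega, by simp⟩
        · intro j hj; simp at hj
        · intro i hi
          simp only [List.length_singleton] at hi
          have : i = 0 := by omega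
          subst this
          exact ⟨t, rfl⟩
        · intro i hi j hj1 hj2 t'' ht''
          simp only [List.length_singleton] at hi
          have : i = 0 := by omega
          subst this
          rw [hfm, hX]
          simp only [List.cons_append, List.nil_append, List.getD_cons_succ,
            List.getD_cons_zero, List.length_cons] at hj2 ⊢
          cases j with
          | zero =>
            rw [show ((Sum.inr t : α ⊕ L) :: v).getD 0 d = Sum.inr t from rfl] at ht''
            rw [List.destutter_singleton]
            simpa using Sum.inr.inj ht''
          | succ j' =>
            rw [List.getD_cons_succ] at ht''
            exact absurd ht'' (hnone j' (by omega) t'')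
      · -- v.filterMap = t' :: X''
        obtain ⟨r', hr'⟩ : ∃ r, (v.filterMap Sum.getRight?).destutter (· ≠ ·) = t' :: r := by
          rw [hX, List.destutter_cons']
          exact aux_destutter'_head X'' t'
        cases P with
        | nil => rw [hr'] at hPlen; simp at hPlen
        | cons p₀ P'' =>
          have hQold : (p₀ :: P'') ++ [v.length] = p₀ :: (P'' ++ [v.length]) := by simp
          by_cases htt : t = t'
          · -- t joins the first run
            subst htt
            have hTnew : (((Sum.inr t : α ⊕ L) :: v).filterMap Sum.getRight?).destutter (· ≠ ·)
                = (v.filterMap Sum.getRight?).destutter (· ≠ ·) := by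
              rw [hfm, hX, List.destutter_cons_cons, if_neg (by simp), List.destutter_cons']
            have hQnew : (0 :: P''.map (· + 1)) ++ [((Sum.inr t : α ⊕ L) :: v).length]
                = 0 :: (P'' ++ [v.length]).map (· + 1) := by simp
            have hSlen : (P'' ++ [v.length]).length = P''.length + 1 := by simp
            have hSget : ∀ i ≤ P''.length,
                ((P'' ++ [v.length]).map (· + 1)).getD i 0
                  = (P'' ++ [v.length]).getD i 0 + 1 := by
              intro i hi
              exact aux_getD_map_lt _ _ (by omega) 0 0
            have hchainS : (P'' ++ [v.length]).Chain' (· < ·) := by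
              rw [hQold] at hPchain
              exact hPchain.tail
            refine ⟨0 :: P''.map (· + 1), ?_, ?_, ?_, ?_, ?_⟩
            · rw [hTnew]
              simpa using hPlen
            · rw [hQnew, List.Chain', List.isChain_cons]
              constructor
              · intro y hy
                rw [List.head?_map] at hy
                rcases hh : (P'' ++ [v.length]).head? with _ | q
                · rw [hh] at hy; simp at hy
                · rw [hh] at hy; simp at hy; omega
              · rw [List.isChain_map]
                exact hchainS.imp (fun h => by omega)
            · intro j hj
              rw [hQnew] at hj
              simp at hj
            · intro i hi
              simp only [List.length_cons, List.length_map] at hi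
              rw [hQnew]
              cases i with
              | zero => exact ⟨t, rfl⟩
              | succ i' =>
                rw [List.getD_cons_succ, hSget i' (by omega), List.getD_cons_succ]
                have h4 := hPinr (i' + 1) (by simpa using hi)
                rw [hQold, List.getD_cons_succ] at h4
                exact h4
            · intro i hi j hj1 hj2 t'' ht''
              simp only [List.length_cons, List.length_map] at hi
              rw [hQnew] at hj1 hj2
              rw [hTnew]
              cases i with
              | zero =>
                rw [List.getD_cons_succ, hSget 0 (by omega)] at hj2
                cases j with
                | zero =>
                  rw [show ((Sum.inr t : α ⊕ L) :: v).getD 0 d = Sum.inr t from rfl] at ht''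
                  rw [hr', List.getD_cons_zero]
                  exact Sum.inr.inj ht''
                | succ j' =>
                  rw [List.getD_cons_succ] at ht''
                  by_cases hj' : j' < p₀
                  · have h0 := hP0 j' (by rw [hQold, List.getD_cons_zero]; exact hj')
                    rw [ht''] at h0
                    simp at h0
                  · have h5 := hPrun 0 (by simp) j'
                      (by rw [hQold, List.getD_cons_zero]; omega)
                      (by rw [hQold, List.getD_cons_succ]; omega) t'' ht''
                    exact h5
              | succ i' =>
                rw [List.getD_cons_succ, hSget i' (by omega)] at hj1
                rw [List.getD_cons_succ, hSget (i' + 1) (by omega)] at hj2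
                obtain ⟨j', rfl⟩ : ∃ j'', j = j'' + 1 := ⟨j - 1, by omega⟩
                rw [List.getD_cons_succ] at ht''
                have h5 := hPrun (i' + 1) (by simpa using hi) j'
                  (by rw [hQold, List.getD_cons_succ]; omega)
                  (by rw [hQold, List.getD_cons_succ]; omega) t'' ht''
                exact h5
          · -- t starts a new run
            have hTnew : (((Sum.inr t : α ⊕ L) :: v).filterMap Sum.getRight?).destutter (· ≠ ·)
                = t :: (v.filterMap Sum.getRight?).destutter (· ≠ ·) := by
              rw [hfm, hX, List.destutter_cons_cons, if_pos htt, List.destutter_cons']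
            have hQnew : (0 :: (p₀ :: P'').map (· + 1)) ++ [((Sum.inr t : α ⊕ L) :: v).length]
                = 0 :: ((p₀ :: P'') ++ [v.length]).map (· + 1) := by simp
            have hQoldlen : ((p₀ :: P'') ++ [v.length]).length = P''.length + 2 := by simp
            have hQget : ∀ i ≤ P''.length + 1,
                (((p₀ :: P'') ++ [v.length]).map (· + 1)).getD i 0
                  = ((p₀ :: P'') ++ [v.length]).getD i 0 + 1 := by
              intro i hi
              exact aux_getD_map_lt _ _ (by omega) 0 0
            refine ⟨0 :: (p₀ :: P'').map (· + 1), ?_, ?_, ?_, ?_, ?_⟩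
            · rw [hTnew]
              simpa using hPlen
            · rw [hQnew, List.Chain', List.isChain_cons]
              constructor
              · intro y hy
                rw [List.head?_map] at hy
                rcases hh : ((p₀ :: P'') ++ [v.length]).head? with _ | q
                · rw [hh] at hy; simp at hy
                · rw [hh] at hy; simp at hy; omega
              · rw [List.isChain_map]
                exact hPchain.imp (fun h => by omega)
            · intro j hj
              rw [hQnew] at hj
              simp at hj
            · intro i hi
              simp only [List.length_cons, List.length_map] at hi
              rw [hQnew]
              cases i with
              | zero => exact ⟨t, rfl⟩
              | succ i' =>
                rw [List.getD_cons_succ, hQget i' (by omega), List.getD_cons_succ]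
                exact hPinr i' (by simpa using hi)
            · intro i hi j hj1 hj2 t'' ht''
              simp only [List.length_cons, List.length_map] at hi
              rw [hQnew] at hj1 hj2
              rw [hTnew]
              cases i with
              | zero =>
                rw [List.getD_cons_succ, hQget 0 (by omega)] at hj2
                cases j with
                | zero =>
                  rw [show ((Sum.inr t : α ⊕ L) :: v).getD 0 d = Sum.inr t from rfl] at ht''
                  rw [List.getD_cons_zero]
                  exact Sum.inr.inj ht''
                | succ j' =>
                  rw [List.getD_cons_succ] at ht''
                  have hp₀ : ((p₀ :: P'') ++ [v.length]).getD 0 0 = p₀ := by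
                    rw [hQold, List.getD_cons_zero]
                  have h0 := hP0 j' (by rw [hp₀]; rw [hp₀] at hj2; omega)
                  rw [ht''] at h0
                  simp at h0
              | succ i' =>
                rw [List.getD_cons_succ, hQget i' (by omega)] at hj1
                rw [List.getD_cons_succ, hQget (i' + 1) (by omega)] at hj2
                obtain ⟨j', rfl⟩ : ∃ j'', j = j'' + 1 := ⟨j - 1, by omega⟩
                rw [List.getD_cons_succ] at ht''
                rw [List.getD_cons_succ]
                exact hPrun i' (by simpa using hi) j' (by omega) (by omega) t'' ht''

/-- For a finite alphabet `𝓛` disjoint from `[k]`, an `n`-dimensional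
Carlson–Simpson sequence `𝐰 = (w, ws)` over `k` and a type `τ` of length `m ≤ n`,
the set `𝐰(k,𝓛,τ)` of elements of `𝐰(k,𝓛)` of type `τ` equals
`{𝐳(τ) : 𝐳 ∈ Subseq_m(𝐰)}`. -/
theorem stmt_6 (k : ℕ) (hk : 2 ≤ k) {L : Type*} [DecidableEq L] [Fintype L]
    (w : List (Fin k)) (ws : List (List (Option (Fin k))))
    (hleft : ∀ vw ∈ ws, IsLeftVar k vw)
    (τ : List L) (hτ : τ ≠ []) (hchain : τ.Chain' (· ≠ ·)) (hlen : τ.length ≤ ws.length) :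
    {u : List (Fin k ⊕ L) | ∃ v : List (Fin k ⊕ L),
        v.length ≤ ws.length ∧ u = applyG k w ws v ∧ typeOf k u = τ} =
      {u : List (Fin k ⊕ L) | ∃ (z : List (Fin k)) (zs : List (List (Option (Fin k)))),
        zs.length = τ.length ∧ IsCSSubseq k w ws z zs ∧
        u = applyG k z zs (τ.map Sum.inr)} := by
  have d0 : Fin k := ⟨0, by omega⟩
  have t₀ : L := τ.head hτ
  ext u
  simp only [Set.mem_setOf_eq]
  constructor
  · -- from the tree to subsequences
    rintro ⟨v, hvlen, rfl, htype⟩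
    set d : Fin k ⊕ L := Sum.inl d0 with hddef
    have hTv : (v.filterMap Sum.getRight?).destutter (· ≠ ·) = τ := by
      rw [← aux_type k w ws v hvlen hleft]; exact htype
    obtain ⟨P, hPlen, hPchain, hP0, hPinr, hPrun⟩ := aux_exists_runs d v
    rw [hTv] at hPlen hPrun
    set Q : List ℕ := P ++ [v.length] with hQdef
    set nf : ℕ → ℕ := fun i => Q.getD i 0 with hnfdef
    set a : ℕ → Option (Fin k) := fun j => Sum.elim some (fun _ => none) (v.getD j d)
      with hadef
    have hQlen : Q.length = τ.length + 1 := by simp [hQdef, hPlen]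
    have hpair : List.Pairwise (· < ·) Q := List.isChain_iff_pairwise.1 hPchain
    have hmonoQ : ∀ p q, p < q → q ≤ τ.length → nf p < nf q := by
      intro p q hpq hq
      have hp' : p < Q.length := by omega
      have hq' : q < Q.length := by omega
      have h6 := List.pairwise_iff_getElem.1 hpair p q hp' hq' hpq
      show Q.getD p 0 < Q.getD q 0
      rw [List.getD_eq_getElem _ _ hp', List.getD_eq_getElem _ _ hq']
      exact h6
    have hnfm : nf τ.length = v.length := by
      show Q.getD τ.length 0 = v.length
      rw [List.getD_eq_getElem _ _ (by omega)]
      exact List.getElem_concat_length hPlen.symm _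
    have haj : ∀ j < nf 0, ∃ c, v.getD j d = Sum.inl c ∧ a j = some c := by
      intro j hj
      have h0 := hP0 j hj
      obtain ⟨y, hy⟩ := Sum.isLeft_iff.1 h0
      refine ⟨y, hy, ?_⟩
      show Sum.elim some (fun _ => none) (v.getD j d) = some y
      rw [hy]
      rfl
    set z : List (Fin k) := w ++ ((List.range (nf 0)).map fun j =>
      subst k (ws.getD j []) ((a j).getD d0)).flatten with hzdef
    set zs : List (List (Option (Fin k))) := (List.range τ.length).map fun i =>
      ((List.Ico (nf i) (nf (i + 1))).map fun j => substO k (ws.getD j []) (a j)).flatten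
      with hzsdef
    have hzslen : zs.length = τ.length := by simp [hzsdef]
    have hzsi : ∀ i < τ.length, zs.getD i [] =
        ((List.Ico (nf i) (nf (i + 1))).map fun j => substO k (ws.getD j []) (a j)).flatten :=
      fun i hi => aux_getD_range_map _ hi _
    have hz : z.map some = w.map some ++
        ((List.range (nf 0)).map fun j => substO k (ws.getD j []) (a j)).flatten := by
      rw [hzdef, List.map_append, List.map_flatten, List.map_map]
      congr 2
      apply List.map_congr_left
      intro j hj
      rw [List.mem_range] at hj
      obtain ⟨c, _, hc⟩ := haj j hj
      show (subst k (ws.getD j []) ((a j).getD d0)).map some = substO k (ws.getD j []) (a j)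
      rw [hc, Option.getD_some]
      exact aux_subst_map_some k (ws.getD j []) c
    have hlen' : nf τ.length ≤ ws.length := by rw [hnfm]; exact hvlen
    have hmono' : ∀ i < τ.length, nf i ≤ nf (i + 1) :=
      fun i hi => le_of_lt (hmonoQ i (i + 1) (by omega) (by omega))
    have hv1 : ∀ j < nf 0, v.getD j d = (a j).elim (Sum.inr t₀) Sum.inl := by
      intro j hj
      obtain ⟨c, hvc, hc⟩ := haj j hj
      rw [hvc, hc]
      rfl
    have hv2 : ∀ i < τ.length, ∀ j, nf i ≤ j → j < nf (i + 1) →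
        v.getD j d = (a j).elim (Sum.inr (τ.getD i t₀)) Sum.inl := by
      intro i hi j hj1 hj2
      rcases hvj : v.getD j d with x | t
      · have hax : a j = some x := by
          show Sum.elim some (fun _ => none) (v.getD j d) = some x
          rw [hvj]
          rfl
        rw [hax]; rfl
      · have hanone : a j = none := by
          show Sum.elim some (fun _ => none) (v.getD j d) = none
          rw [hvj]
          rfl
        rw [hanone]
        have h5 := hPrun i (by omega) j hj1 hj2 t hvj
        have h6 : τ.getD i t = τ.getD i t₀ := by
          rw [List.getD_eq_getElem _ _ hi, List.getD_eq_getElem _ _ hi]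
        exact congrArg Sum.inr (h5.symm.trans h6)
    refine ⟨z, zs, hzslen, ⟨a, nf, ?_, ?_, ?_, ?_, hz, ?_⟩, ?_⟩
    · rw [hzslen]
      intro p hp q hq hpq
      exact hmonoQ p q hpq hq
    · rw [hzslen, hnfm]; exact hvlen
    · intro i hi
      rw [hzslen] at hi
      obtain ⟨t, hti⟩ := hPinr i (by omega)
      show Sum.elim some (fun _ => none) (v.getD (nf i) d) = none
      rw [hti]
      rfl
    · intro j hj
      obtain ⟨c, _, hc⟩ := haj j hj
      rw [hc]; simp
    · intro i hi
      rw [hzslen] at hi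
      exact hzsi i hi
    · exact (aux_applyE k w ws τ t₀ d a nf v z zs hlen' hmono' hnfm.symm hv1 hv2 hz
        hzslen hzsi).symm
  · -- from subsequences to the tree
    rintro ⟨z, zs, hzslen, ⟨a, nf, hsm, hnm, ha, ha0, hz, hzsi⟩, rfl⟩
    rw [hzslen] at hsm hnm ha hzsi
    have hmono : ∀ i < τ.length, nf i ≤ nf (i + 1) := fun i hi =>
      le_of_lt (hsm (by simp; omega) (by simp; omega) (by omega))
    have hstrict : ∀ i < τ.length, nf i < nf (i + 1) := fun i hi =>
      hsm (by simp; omega) (by simp; omega) (by omega)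
    have hmonoS := aux_step_mono nf τ.length hmono
    set idx : ℕ → ℕ := fun j => Nat.findGreatest (fun i => nf i ≤ j) τ.length with hidxdef
    have hidx : ∀ i < τ.length, ∀ j, nf i ≤ j → j < nf (i + 1) → idx j = i := by
      intro i hi j hj1 hj2
      show Nat.findGreatest (fun i => nf i ≤ j) τ.length = i
      rw [Nat.findGreatest_eq_iff]
      refine ⟨by omega, fun _ => hj1, ?_⟩
      intro n hn hn' hcon
      have h7 : nf (i + 1) ≤ nf n := hmonoS n hn' (i + 1) (by omega)
      omega
    set V : ℕ → Fin k ⊕ L := fun j => (a j).elim (Sum.inr (τ.getD (idx j) t₀)) Sum.inl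
      with hVdef
    set v : List (Fin k ⊕ L) := (List.range (nf τ.length)).map V with hvdef
    have hvlen : v.length = nf τ.length := by simp [hvdef]
    have hvget : ∀ j < nf τ.length, v.getD j (Sum.inr t₀) = V j := by
      intro j hj
      exact aux_getD_range_map V hj _
    have hv1 : ∀ j < nf 0, v.getD j (Sum.inr t₀) = (a j).elim (Sum.inr t₀) Sum.inl := by
      intro j hj
      rw [hvget j (lt_of_lt_of_le hj (hmonoS τ.length le_rfl 0 (by omega)))]
      obtain ⟨c, hc⟩ := Option.ne_none_iff_exists'.1 (ha0 j hj)
      show (a j).elim (Sum.inr (τ.getD (idx j) t₀)) Sum.inl = (a j).elim (Sum.inr t₀) Sum.inl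
      rw [hc]
      rfl
    have hv2 : ∀ i < τ.length, ∀ j, nf i ≤ j → j < nf (i + 1) →
        v.getD j (Sum.inr t₀) = (a j).elim (Sum.inr (τ.getD i t₀)) Sum.inl := by
      intro i hi j hj1 hj2
      rw [hvget j (lt_of_lt_of_le hj2 (hmonoS τ.length le_rfl (i + 1) (by omega)))]
      show (a j).elim (Sum.inr (τ.getD (idx j) t₀)) Sum.inl = _
      rw [hidx i hi j hj1 hj2]
    have happ : applyG k z zs (τ.map Sum.inr) = applyG k w ws v :=
      aux_applyE k w ws τ t₀ (Sum.inr t₀) a nf v z zs hnm hmono hvlen hv1 hv2 hz hzslen hzsi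
    refine ⟨v, ?_, happ, ?_⟩
    · rw [hvlen]; exact hnm
    · rw [happ, aux_type k w ws v (le_trans (le_of_eq hvlen) hnm) hleft]
      exact aux_fwd_type k τ t₀ a nf idx hidx hmono hstrict ha ha0 hchain
end

section
/- Let k, p ≥ 2. The word representation map R_p : Fl_p([k]^{<ℕ}) → W(k, 𝓛_p) on flat sets of cardinality p is injective. -/
/-- The word representation `R_p(F)` of a flat set `F` of cardinality `p`:
order `F` lexicographically as `t₀ <lex … <lex t_{p−1}`; for each coordinate `i` form the
column `āᵢ = (a_{i,0},…,a_{i,p−1})`; output the letter `a ∈ [k]` (`Sum.inl`) if the column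
is constant with value `a`, and the column itself (`Sum.inr`, a letter of `𝓛_p`) otherwise. -/
def Rp (k p : ℕ) (hk : 0 < k) (hp : 0 < p) (F : Finset (List (Fin k))) :
    List (Fin k ⊕ (Fin p → Fin k)) :=
  (List.range ((F.sort (· ≤ ·)).headD []).length).map fun i =>
    let row : Fin p → Fin k := fun j => ((F.sort (· ≤ ·)).getD (j : ℕ) []).getD i ⟨0, hk⟩
    if ∀ j, row j = row ⟨0, hp⟩ then Sum.inl (row ⟨0, hp⟩) else Sum.inr row

/-- The type of a flat set `F` of cardinality `p`: the type of its word representation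
`R_p(F)` (erase the letters of `[k]`, collapse runs of equal letters of `𝓛_p`). -/
def flatType (k p : ℕ) (hk : 0 < k) (hp : 0 < p) (F : Finset (List (Fin k))) :
    List (Fin p → Fin k) :=
  ((Rp k p hk hp F).filterMap Sum.getRight?).destutter (· ≠ ·)

lemma Rp_length (k p : ℕ) (hk : 0 < k) (hp : 0 < p) (F : Finset (List (Fin k))) :
    (Rp k p hk hp F).length = ((F.sort (· ≤ ·)).headD []).length := by
  simp [Rp]

lemma Rp_getElem (k p : ℕ) (hk : 0 < k) (hp : 0 < p) (F : Finset (List (Fin k)))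
    (i : ℕ) (hi : i < (Rp k p hk hp F).length) :
    (Rp k p hk hp F)[i] =
      (let row : Fin p → Fin k :=
        fun j => ((F.sort (· ≤ ·)).getD (j : ℕ) []).getD i ⟨0, hk⟩
      if ∀ j, row j = row ⟨0, hp⟩ then Sum.inl (row ⟨0, hp⟩) else Sum.inr row) := by
  rw [Rp_length] at hi
  simp [Rp]

/-- For `k, p ≥ 2`, the word representation map
`R_p : Fl_p([k]^{<ℕ}) → W(k, 𝓛_p)` on flat sets of cardinality `p` is injective. -/
theorem stmt_9 (k p : ℕ) (hk : 2 ≤ k) (hp : 2 ≤ p) :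
    Set.InjOn (Rp k p (by omega) (by omega))
      {F : Finset (List (Fin k)) | F.card = p ∧ ∃ n, ∀ w ∈ F, w.length = n} := by
  have hk0 : 0 < k := by omega
  have hp0 : 0 < p := by omega
  intro F hF G hG hRp
  obtain ⟨hFc, nF, hFn⟩ := hF
  obtain ⟨hGc, nG, hGn⟩ := hG
  set L := F.sort (· ≤ ·) with hLdef
  set M := G.sort (· ≤ ·) with hMdef
  have hLlen : L.length = p := by rw [hLdef, Finset.length_sort, hFc]
  have hMlen : M.length = p := by rw [hMdef, Finset.length_sort, hGc]
  have hLne : L ≠ [] := by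
    intro h; rw [h] at hLlen; simp at hLlen; omega
  have hMne : M ≠ [] := by
    intro h; rw [h] at hMlen; simp at hMlen; omega
  have hLmem : ∀ w ∈ L, w.length = nF := by
    intro w hw; exact hFn w ((Finset.mem_sort _).1 hw)
  have hMmem : ∀ w ∈ M, w.length = nG := by
    intro w hw; exact hGn w ((Finset.mem_sort _).1 hw)
  have hheadL : (L.headD []).length = nF := by
    obtain ⟨a, L', hc⟩ := List.exists_cons_of_ne_nil hLne
    rw [hc]; exact hLmem a (by rw [hc]; simp)
  have hheadM : (M.headD []).length = nG := by
    obtain ⟨a, M', hc⟩ := List.exists_cons_of_ne_nil hMne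
    rw [hc]; exact hMmem a (by rw [hc]; simp)
  have hn : nF = nG := by
    have := congrArg List.length hRp
    rw [Rp_length, Rp_length, ← hLdef, ← hMdef, hheadL, hheadM] at this
    exact this
  -- column equality
  have hcol : ∀ i < nF,
      (fun j : Fin p => (L.getD (j : ℕ) []).getD i ⟨0, hk0⟩)
        = (fun j : Fin p => (M.getD (j : ℕ) []).getD i ⟨0, hk0⟩) := by
    intro i hi
    have hiF : i < (Rp k p hk0 hp0 F).length := by
      rw [Rp_length, ← hLdef, hheadL]; exact hi
    have hiG : i < (Rp k p hk0 hp0 G).length := by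
      rw [Rp_length, ← hMdef, hheadM]; omega
    have heq : (Rp k p hk0 hp0 F)[i] = (Rp k p hk0 hp0 G)[i] :=
      List.getElem_of_eq hRp hiF
    rw [Rp_getElem, Rp_getElem, ← hLdef, ← hMdef] at heq
    set rF : Fin p → Fin k := fun j => (L.getD (j : ℕ) []).getD i ⟨0, hk0⟩ with hrF
    set rG : Fin p → Fin k := fun j => (M.getD (j : ℕ) []).getD i ⟨0, hk0⟩ with hrG
    by_cases hF' : ∀ j, rF j = rF ⟨0, hp0⟩ <;> by_cases hG' : ∀ j, rG j = rG ⟨0, hp0⟩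
    · rw [if_pos hF', if_pos hG'] at heq
      have h0 : rF ⟨0, hp0⟩ = rG ⟨0, hp0⟩ := Sum.inl.inj heq
      funext j
      rw [hF' j, hG' j, h0]
    · rw [if_pos hF', if_neg hG'] at heq
      exact absurd heq (by simp)
    · rw [if_neg hF', if_pos hG'] at heq
      exact absurd heq (by simp)
    · rw [if_neg hF', if_neg hG'] at heq
      exact Sum.inr.inj heq
  -- elementwise equality of sorted lists
  have hLM : L = M := by
    apply List.ext_getElem (by rw [hLlen, hMlen])
    intro j hj hj'
    have hjp : j < p := by rwa [hLlen] at hj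
    have hLjlen : L[j].length = nF := hLmem _ (List.getElem_mem hj)
    have hMjlen : M[j].length = nG := hMmem _ (List.getElem_mem hj')
    apply List.ext_getElem (by rw [hLjlen, hMjlen, hn])
    intro i hi hi'
    have hinF : i < nF := by rwa [hLjlen] at hi
    have h := congrFun (hcol i hinF) ⟨j, hjp⟩
    simp only at h
    rw [List.getD_eq_getElem L [] hj, List.getD_eq_getElem M [] hj',
        List.getD_eq_getElem _ _ hi, List.getD_eq_getElem _ _ hi'] at h
    exact h
  have : L.toFinset = M.toFinset := by rw [hLM]
  rwa [hLdef, hMdef, Finset.sort_toFinset, Finset.sort_toFinset] at this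
end

section
/- Let k ≥ 2, let W be a Carlson–Simpson tree of [k]^{<ℕ}, and let G ⊆ W with |G| ≥ 2. Then there exists a basic set B with dimension at most |G| and width at most |G| such that G ⊆ B ⊆ W. -/
/-- A flat set: at least two words, all of the same length. -/
def IsFlat (k : ℕ) (F : Finset (List (Fin k))) : Prop :=
  2 ≤ F.card ∧ ∃ n, ∀ w ∈ F, w.length = n

/-- The infimum (longest common initial segment) of `F` is the empty word. -/
def InfEmpty (k : ℕ) (F : Finset (List (Fin k))) : Prop :=
  ∀ u : List (Fin k), (∀ w ∈ F, u <+: w) → u = []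

/-- The basic set generated by `(s, F₀,…,F_{ℓ−1})`:
`B = {s} ∪ ⋃_{i<ℓ} (s⌢F₀⌢…⌢Fᵢ)`, where `s⌢F₀⌢…⌢Fᵢ` is the set of all concatenations
`s⌢u₀⌢…⌢uᵢ` with `uⱼ ∈ Fⱼ`. -/
def basicSet (k : ℕ) (s : List (Fin k)) (Fs : List (Finset (List (Fin k)))) :
    Set (List (Fin k)) :=
  {s} ∪ ⋃ i ∈ Set.Iio Fs.length,
    (Fs.take (i + 1)).foldl
      (fun A F => {x | ∃ u ∈ A, ∃ v ∈ F, x = u ++ v}) {s}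

/- ### auxiliary definitions -/

/-- One step of the product construction. -/
def step (k : ℕ) (A : Set (List (Fin k))) (F : Finset (List (Fin k))) : Set (List (Fin k)) :=
  {x | ∃ u ∈ A, ∃ v ∈ F, x = u ++ v}

lemma basicSet_eq (k : ℕ) (s : List (Fin k)) (Fs : List (Finset (List (Fin k)))) :
    basicSet k s Fs = {s} ∪ ⋃ i ∈ Set.Iio Fs.length, ((Fs.take (i + 1)).foldl (step k) {s}) := rfl

lemma foldl_step_mono {k : ℕ} :
    ∀ (L : List (Finset (List (Fin k)))) {I I' : Set (List (Fin k))}, I ⊆ I' →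
      L.foldl (step k) I ⊆ L.foldl (step k) I' := by
  intro L
  induction L with
  | nil => intro I I' h; simpa using h
  | cons F T ih =>
      intro I I' h
      simp only [List.foldl_cons]
      exact ih (fun x hx => by
        obtain ⟨u, hu, v, hv, rfl⟩ := hx
        exact ⟨u, h hu, v, hv, rfl⟩)

/-- The block of the tree corresponding to positions `[l, r)` of the variable words,
with choices `seg`. -/
def blk (k : ℕ) (ws : List (List (Option (Fin k)))) (l r : ℕ) (seg : List (Fin k)) :
    List (Fin k) :=
  (List.zipWith (subst k) ((ws.drop l).take (r - l)) seg).flatten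

lemma csApply_append_blk (k : ℕ) (w : List (Fin k)) (ws : List (List (Option (Fin k))))
    {q seg : List (Fin k)} {l r : ℕ} (hq : q.length = l) (hseg : seg.length = r - l)
    (hlr : l ≤ r) (hr : r ≤ ws.length) :
    csApply k w ws (q ++ seg) = csApply k w ws q ++ blk k ws l r seg := by
  have hlm : l ≤ ws.length := le_trans hlr hr
  have h1 : List.zipWith (subst k) ws (q ++ seg)
      = List.zipWith (subst k) (ws.take l) q ++ List.zipWith (subst k) (ws.drop l) seg := by
    conv_lhs => rw [← List.take_append_drop l ws]
    exact List.zipWith_append (by simp [List.length_take, hq, Nat.min_eq_left hlm])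
  have h2 : List.zipWith (subst k) (ws.take l) q = List.zipWith (subst k) ws q := by
    have h := List.take_zipWith (f := subst k) (l := ws) (l' := q) (i := l)
    rw [List.take_of_length_le hq.le] at h
    rw [← h, List.take_of_length_le (by simp [List.length_zipWith, hq])]
  have h3 : List.zipWith (subst k) (ws.drop l) seg
      = List.zipWith (subst k) ((ws.drop l).take (r - l)) seg := by
    have h := List.take_zipWith (f := subst k) (l := ws.drop l) (l' := seg) (i := r - l)
    rw [List.take_of_length_le hseg.le] at h
    rw [← h, List.take_of_length_le (by simp [List.length_zipWith, hseg])]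
  simp only [csApply, blk, h1, List.flatten_append, h2, h3, List.append_assoc]

lemma map_length_zipWith_subst {k : ℕ} :
    ∀ (T : List (List (Option (Fin k)))) (seg : List (Fin k)), T.length ≤ seg.length →
      (List.zipWith (subst k) T seg).map List.length = T.map List.length := by
  intro T
  induction T with
  | nil => simp
  | cons vw T ih =>
      intro seg hlen
      cases seg with
      | nil => simp at hlen
      | cons a seg' =>
          simp only [List.zipWith_cons_cons, List.map_cons, List.cons.injEq]
          exact ⟨by simp [subst], ih seg' (by simpa using hlen)⟩

lemma blk_length (k : ℕ) (ws : List (List (Option (Fin k)))) (l r : ℕ)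
    {seg : List (Fin k)} (hseg : seg.length = r - l) :
    (blk k ws l r seg).length = ((((ws.drop l).take (r - l))).map List.length).sum := by
  rw [blk, List.length_flatten, map_length_zipWith_subst]
  rw [hseg, List.length_take]
  exact min_le_left _ _

lemma blk_head (k : ℕ) (ws : List (List (Option (Fin k)))) {l r : ℕ}
    (hlr : l < r) (hr : r ≤ ws.length) (hleft : ∀ vw ∈ ws, IsLeftVar k vw)
    {seg : List (Fin k)} (hseg : seg.length = r - l) :
    (blk k ws l r seg).head? = seg.head? := by
  have hlm : l < ws.length := lt_of_lt_of_le hlr hr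
  obtain ⟨d, hd⟩ : ∃ d, r - l = d + 1 := ⟨r - l - 1, by omega⟩
  obtain ⟨c, t, hct⟩ : ∃ c t, seg = c :: t :=
    List.exists_cons_of_ne_nil (by intro h; rw [h] at hseg; simp at hseg; omega)
  obtain ⟨t', ht'⟩ := hleft (ws[l]) (List.getElem_mem hlm)
  rw [blk, List.drop_eq_getElem_cons hlm, hd, hct, List.take_succ_cons,
    List.zipWith_cons_cons, List.flatten_cons, ht']
  simp [subst]

/-- Flip a letter of `[k]` to a different one (when `2 ≤ k`). -/
def flip' {k : ℕ} (b : Fin k) : Fin k :=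
  if b.val = 0 then ⟨1 % k, Nat.mod_lt 1 b.pos⟩ else ⟨0, b.pos⟩

lemma flip'_ne {k : ℕ} (hk : 2 ≤ k) (b : Fin k) : flip' b ≠ b := by
  rcases b with ⟨v, hv⟩
  by_cases h : v = 0 <;>
    simp [flip', h, Fin.ext_iff, Nat.mod_eq_of_lt (by omega : 1 < k)] <;> omega

/-- The set of blocks coming from the actual words. -/
def S0 (k : ℕ) (ws : List (List (Option (Fin k)))) (A : Finset (List (Fin k)))
    (l r : ℕ) : Finset (List (Fin k)) :=
  (A.filter fun a => r ≤ a.length).image fun a => blk k ws l r ((a.take r).drop l)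

/-- Flip the first letter of a segment. -/
def fixSeg {k : ℕ} : List (Fin k) → List (Fin k)
  | [] => []
  | c :: t => flip' c :: t

lemma fixSeg_length {k : ℕ} (seg : List (Fin k)) : (fixSeg seg).length = seg.length := by
  cases seg <;> rfl

open Classical in
/-- The flat set at level `(l, r)`, with a fixer element added when all blocks share
their first letter. -/
noncomputable def Flev (k : ℕ) (ws : List (List (Option (Fin k))))
    (A : Finset (List (Fin k))) (wit : ℕ → List (Fin k)) (l r : ℕ) :
    Finset (List (Fin k)) :=
  if ∃ x ∈ S0 k ws A l r, ∃ y ∈ S0 k ws A l r, x.head? ≠ y.head? then S0 k ws A l r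
  else insert (blk k ws l r (fixSeg (((wit r).take r).drop l))) (S0 k ws A l r)

lemma S0_subset_Flev (k : ℕ) (ws : List (List (Option (Fin k))))
    (A : Finset (List (Fin k))) (wit : ℕ → List (Fin k)) (l r : ℕ) :
    S0 k ws A l r ⊆ Flev k ws A wit l r := by
  classical
  rw [Flev]
  split
  · exact Finset.Subset.refl _
  · exact Finset.subset_insert _ _

/-- Build the list of flats from the list of cut points. -/
def buildF {k : ℕ} (Fl : ℕ → ℕ → Finset (List (Fin k))) :
    ℕ → List ℕ → List (Finset (List (Fin k)))
  | _, [] => []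
  | l, r :: rs => Fl l r :: buildF Fl r rs

lemma buildF_length {k : ℕ} (Fl : ℕ → ℕ → Finset (List (Fin k))) :
    ∀ (rs : List ℕ) (l : ℕ), (buildF Fl l rs).length = rs.length := by
  intro rs
  induction rs with
  | nil => intro l; rfl
  | cons r rs ih => intro l; simp [buildF, ih r]

lemma mem_buildF {k : ℕ} (Fl : ℕ → ℕ → Finset (List (Fin k))) :
    ∀ (rs : List ℕ) (l : ℕ), List.Pairwise (· < ·) (l :: rs) →
      ∀ F ∈ buildF Fl l rs, ∃ l' r', F = Fl l' r' ∧ (l' = l ∨ l' ∈ rs) ∧ r' ∈ rs ∧ l' < r' := by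
  intro rs
  induction rs with
  | nil => intro l _ F hF; simp [buildF] at hF
  | cons r rs ih =>
      intro l hsort F hF
      rw [List.pairwise_cons] at hsort
      simp only [buildF, List.mem_cons] at hF
      rcases hF with rfl | hF
      · exact ⟨l, r, rfl, Or.inl rfl, List.mem_cons_self,
          hsort.1 r (List.mem_cons_self)⟩
      · obtain ⟨l', r', h1, h2, h3, h4⟩ := ih r hsort.2 F hF
        exact ⟨l', r', h1, Or.inr (h2.elim (fun h => h ▸ List.mem_cons_self)
          (fun h => List.mem_cons_of_mem _ h)), List.mem_cons_of_mem _ h3, h4⟩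

/-- If `W` is a Carlson–Simpson tree of `[k]^{<ℕ}` and `G ⊆ W` with
`|G| ≥ 2`, then there is a basic set `B` of dimension at most `|G|` and width at most
`|G|` with `G ⊆ B ⊆ W`. -/
theorem stmt_12 (k : ℕ) (hk : 2 ≤ k)
    (w : List (Fin k)) (ws : List (List (Option (Fin k))))
    (hws : ws ≠ []) (hleft : ∀ vw ∈ ws, IsLeftVar k vw)
    (G : Finset (List (Fin k))) (hG : 2 ≤ G.card) (hGW : ↑G ⊆ genTree k w ws) :
    ∃ (s : List (Fin k)) (Fs : List (Finset (List (Fin k)))),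
      Fs ≠ [] ∧ (∀ F ∈ Fs, IsFlat k F ∧ InfEmpty k F) ∧
      Fs.length ≤ G.card ∧ (∀ F ∈ Fs, F.card ≤ G.card) ∧
      ↑G ⊆ basicSet k s Fs ∧ basicSet k s Fs ⊆ genTree k w ws := by
  classical
  -- choice words for the elements of G
  have hag : ∀ g ∈ G, ∃ as : List (Fin k), as.length ≤ ws.length ∧ g = csApply k w ws as :=
    fun g hg => hGW hg
  choose! ag hag1 hag2 using hag
  set A : Finset (List (Fin k)) := G.image ag with hA
  have hAcard : A.card ≤ G.card := Finset.card_image_le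
  have hAlen : ∀ a ∈ A, a.length ≤ ws.length := by
    intro a ha; obtain ⟨g, hg, rfl⟩ := Finset.mem_image.mp ha; exact hag1 g hg
  have hGne : G.Nonempty := Finset.card_pos.mp (by omega)
  obtain ⟨g₀, hg₀⟩ := hGne
  have ha₀ : ag g₀ ∈ A := Finset.mem_image_of_mem _ hg₀
  set a₀ := ag g₀ with ha₀def
  -- the longest common prefix p of A
  set CP : List (List (Fin k)) := a₀.inits.filter (fun u => decide (∀ a ∈ A, u <+: a))
    with hCP
  have hCPne : CP ≠ [] := by
    have h : ([] : List (Fin k)) ∈ CP := by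
      rw [hCP, List.mem_filter]
      exact ⟨by simp [List.mem_inits], by simp⟩
    exact List.ne_nil_of_mem h
  obtain ⟨p, hp⟩ : ∃ p, p ∈ CP.argmax List.length := by
    cases h : CP.argmax List.length with
    | none => exact absurd (List.argmax_eq_none.mp h) hCPne
    | some p => exact ⟨p, rfl⟩
  have hpCP := List.argmax_mem hp
  rw [hCP, List.mem_filter, decide_eq_true_eq] at hpCP
  have hpa : ∀ a ∈ A, p <+: a := hpCP.2
  have hpmax : ∀ u : List (Fin k), (∀ a ∈ A, u <+: a) → u.length ≤ p.length := by
    intro u hu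
    refine List.le_of_mem_argmax ?_ hp
    rw [hCP, List.mem_filter, decide_eq_true_eq]
    exact ⟨(List.mem_inits _ _).mpr (hu a₀ ha₀), hu⟩
  have hplen : p.length ≤ ws.length := le_trans (hpa a₀ ha₀).length_le (hAlen a₀ ha₀)
  have hpeq : ∀ a ∈ A, a.length ≤ p.length → a = p := by
    intro a ha h
    exact ((hpa a ha).eq_of_length (le_antisymm (hpa a ha).length_le h)).symm
  -- the cut lengths
  set LS : Finset ℕ := (A.image List.length).filter (fun n => p.length < n) with hLS
  have hLSfact : ∀ r ∈ LS, (∃ a ∈ A, a.length = r) ∧ p.length < r ∧ r ≤ ws.length := by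
    intro r hr
    rw [hLS, Finset.mem_filter, Finset.mem_image] at hr
    obtain ⟨⟨a, ha, hlen⟩, h2⟩ := hr
    exact ⟨⟨a, ha, hlen⟩, h2, hlen ▸ hAlen a ha⟩
  have hwitex : ∀ r ∈ LS, ∃ a, a ∈ A ∧ a.length = r := by
    intro r hr; obtain ⟨⟨a, ha, hlen⟩, _⟩ := hLSfact r hr; exact ⟨a, ha, hlen⟩
  choose! wit hwitA hwitlen using hwitex
  set Ls := LS.sort (· ≤ ·) with hLs
  have hLsmem : ∀ r ∈ Ls, r ∈ LS := fun r hr => (Finset.mem_sort _).mp hr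
  have hsorted : List.Pairwise (· < ·) (p.length :: Ls) := by
    rw [List.pairwise_cons]
    exact ⟨fun b hb => (hLSfact b (hLsmem b hb)).2.1, List.SortedLT.pairwise (Finset.sortedLT_sort _)⟩
  have hLsne : Ls ≠ [] := by
    obtain ⟨g₁, hg₁, g₂, hg₂, hne⟩ := Finset.one_lt_card.mp hG
    have hane : ag g₁ ≠ ag g₂ := fun h => hne (by rw [hag2 g₁ hg₁, hag2 g₂ hg₂, h])
    have hex : ∃ a ∈ A, p.length < a.length := by
      by_contra hcon
      push_neg at hcon
      have e1 : ag g₁ = p := hpeq _ (Finset.mem_image_of_mem _ hg₁)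
        (hcon _ (Finset.mem_image_of_mem _ hg₁))
      have e2 : ag g₂ = p := hpeq _ (Finset.mem_image_of_mem _ hg₂)
        (hcon _ (Finset.mem_image_of_mem _ hg₂))
      exact hane (e1.trans e2.symm)
    obtain ⟨a, ha, hlen⟩ := hex
    have hmem : a.length ∈ LS := by
      rw [hLS, Finset.mem_filter]
      exact ⟨Finset.mem_image_of_mem _ ha, hlen⟩
    intro hnil
    have := (Finset.mem_sort (α := ℕ) (· ≤ ·)).mpr hmem
    rw [← hLs, hnil] at this
    simp at this
  set Fl := Flev k ws A wit with hFl
  set Fs := buildF Fl p.length Ls with hFsdef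
  set s := csApply k w ws p with hs
  have hFslen : Fs.length = Ls.length := buildF_length _ _ _
  have hLscard : Ls.length ≤ G.card := by
    rw [hLs, Finset.length_sort]
    calc LS.card ≤ (A.image List.length).card := Finset.card_filter_le _ _
      _ ≤ A.card := Finset.card_image_le
      _ ≤ G.card := hAcard
  -- basic facts about segments
  have hseglen : ∀ (l r : ℕ) (a : List (Fin k)), r ≤ a.length →
      ((a.take r).drop l).length = r - l := by
    intro l r a hra
    simp [List.length_drop, List.length_take, Nat.min_eq_left hra]
  have hheadblk : ∀ (l r : ℕ), l < r → r ≤ ws.length → ∀ a : List (Fin k), r ≤ a.length →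
      (blk k ws l r ((a.take r).drop l)).head? = (a.drop l).head? := by
    intro l r hlr hrm a hra
    rw [blk_head k ws hlr hrm hleft (hseglen l r a hra), List.drop_take, List.head?_take,
      if_neg (by omega : ¬ (r - l = 0))]
  -- every member of a level is a block
  have hFmem : ∀ l r, l < r → r ∈ LS → ∀ v ∈ Fl l r,
      ∃ seg : List (Fin k), seg.length = r - l ∧ v = blk k ws l r seg := by
    intro l r hlr hr v hv
    have hS0 : ∀ v ∈ S0 k ws A l r, ∃ seg, seg.length = r - l ∧ v = blk k ws l r seg := by
      intro v hv
      obtain ⟨a, ha, rfl⟩ := Finset.mem_image.mp hv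
      have ha' := Finset.mem_filter.mp ha
      exact ⟨_, hseglen l r a ha'.2, rfl⟩
    rw [hFl, Flev] at hv
    split at hv
    · exact hS0 v hv
    · rcases Finset.mem_insert.mp hv with rfl | hv
      · refine ⟨_, ?_, rfl⟩
        rw [fixSeg_length, hseglen l r _ (le_of_eq (hwitlen r hr).symm)]
      · exact hS0 v hv
  -- the key product step
  have hstepmem : ∀ l r, l < r → r ∈ LS → ∀ a ∈ A, r ≤ a.length →
      csApply k w ws (a.take r) ∈ step k {csApply k w ws (a.take l)} (Fl l r) := by
    intro l r hlr hr a ha hra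
    have hrm : r ≤ ws.length := (hLSfact r hr).2.2
    have hvmem : blk k ws l r ((a.take r).drop l) ∈ Fl l r := by
      rw [hFl]
      refine S0_subset_Flev k ws A wit l r ?_
      exact Finset.mem_image_of_mem _ (Finset.mem_filter.mpr ⟨ha, hra⟩)
    refine ⟨csApply k w ws (a.take l), rfl, _, hvmem, ?_⟩
    have h1 : (a.take r).take l = a.take l := by
      rw [List.take_take, Nat.min_eq_left hlr.le]
    have hsplit : a.take l ++ (a.take r).drop l = a.take r := by
      rw [← h1, List.take_append_drop]
    have hmain := csApply_append_blk k w ws (q := a.take l)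
      (seg := (a.take r).drop l) (l := l) (r := r)
      (by simp [List.length_take, Nat.min_eq_left (le_trans hlr.le hra)])
      (hseglen l r a hra) hlr.le hrm
    rw [hsplit] at hmain
    exact hmain
  -- the basic set is inside the tree
  have hsub : ∀ (rs : List ℕ) (l : ℕ), List.Pairwise (· < ·) (l :: rs) →
      (∀ r ∈ rs, r ∈ LS) → l ≤ ws.length →
      ∀ (j : ℕ) (I : Set (List (Fin k))),
        (∀ y ∈ I, ∃ q : List (Fin k), q.length = l ∧ y = csApply k w ws q) →
        ∀ x ∈ ((buildF Fl l rs).take j).foldl (step k) I, x ∈ genTree k w ws := by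
    intro rs
    induction rs with
    | nil =>
        intro l _ _ hlm j I hI x hx
        simp only [buildF, List.take_nil, List.foldl_nil] at hx
        obtain ⟨q, hq, rfl⟩ := hI x hx
        exact ⟨q, hq ▸ hlm, rfl⟩
    | cons r rs ih =>
        intro l hsort hmem hlm j I hI x hx
        rw [List.pairwise_cons] at hsort
        have hlr : l < r := hsort.1 r (List.mem_cons_self)
        have hrLS : r ∈ LS := hmem r (List.mem_cons_self)
        have hrm : r ≤ ws.length := (hLSfact r hrLS).2.2
        cases j with
        | zero =>
            simp only [buildF, List.take_zero, List.foldl_nil] at hx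
            obtain ⟨q, hq, rfl⟩ := hI x hx
            exact ⟨q, hq ▸ hlm, rfl⟩
        | succ j =>
            simp only [buildF, List.take_succ_cons, List.foldl_cons] at hx
            refine ih r hsort.2 (fun r' hr' => hmem r' (List.mem_cons_of_mem _ hr')) hrm j
              (step k I (Fl l r)) ?_ x hx
            intro y hy
            obtain ⟨u, hu, v, hv, rfl⟩ := hy
            obtain ⟨q, hq, rfl⟩ := hI u hu
            obtain ⟨seg, hseg, rfl⟩ := hFmem l r hlr hrLS v hv
            refine ⟨q ++ seg, by simp [hq, hseg]; omega,
              (csApply_append_blk k w ws hq hseg hlr.le hrm).symm⟩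
  -- covering G
  have hcover : ∀ (rs : List ℕ) (l : ℕ), List.Pairwise (· < ·) (l :: rs) →
      (∀ r ∈ rs, r ∈ LS) → ∀ a ∈ A, l ≤ a.length → a.length ∈ rs →
      ∃ j < rs.length, csApply k w ws a ∈
        ((buildF Fl l rs).take (j + 1)).foldl (step k) {csApply k w ws (a.take l)} := by
    intro rs
    induction rs with
    | nil => intro l _ _ a _ _ h; simp at h
    | cons r rs ih =>
        intro l hsort hmem a ha hla hlen
        rw [List.pairwise_cons] at hsort
        have hlr : l < r := hsort.1 r (List.mem_cons_self)
        have hrLS : r ∈ LS := hmem r (List.mem_cons_self)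
        rcases List.mem_cons.mp hlen with heq | hmem'
        · refine ⟨0, by simp, ?_⟩
          simp only [buildF, List.take_succ_cons, List.take_zero, List.foldl_cons,
            List.foldl_nil]
          have h2 := hstepmem l r hlr hrLS a ha heq.ge
          have h3 : a.take r = a := by rw [← heq]; exact List.take_length (l := a)
          rw [h3] at h2
          exact h2
        · have hra : r < a.length := by
            rcases List.pairwise_cons.mp hsort.2 with ⟨h1, _⟩
            exact h1 _ hmem'
          obtain ⟨j, hj, hmemf⟩ := ih r hsort.2
            (fun r' hr' => hmem r' (List.mem_cons_of_mem _ hr')) a ha hra.le hmem'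
          refine ⟨j + 1, by simpa using Nat.succ_lt_succ hj, ?_⟩
          simp only [buildF, List.take_succ_cons, List.foldl_cons]
          refine foldl_step_mono _ ?_ hmemf
          intro y hy
          rw [Set.mem_singleton_iff] at hy
          subst hy
          exact hstepmem l r hlr hrLS a ha hra.le
  -- per-level structure
  have hpair : ∀ l r, (l = p.length ∨ l ∈ LS) → r ∈ LS → l < r →
      (∃ x ∈ Fl l r, ∃ y ∈ Fl l r, x.head? ≠ y.head?) ∧ (Fl l r).card ≤ G.card := by
    intro l r hl hr hlr
    have hrm : r ≤ ws.length := (hLSfact r hr).2.2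
    have hwA : wit r ∈ A := hwitA r hr
    have hwlen : (wit r).length = r := hwitlen r hr
    have hxstar : blk k ws l r (((wit r).take r).drop l) ∈ S0 k ws A l r :=
      Finset.mem_image_of_mem _ (Finset.mem_filter.mpr ⟨hwA, hwlen.ge⟩)
    by_cases hbr : ∃ x ∈ S0 k ws A l r, ∃ y ∈ S0 k ws A l r, x.head? ≠ y.head?
    · have hEq : Fl l r = S0 k ws A l r := by rw [hFl, Flev, if_pos hbr]
      constructor
      · obtain ⟨x, hx, y, hy, hxy⟩ := hbr
        exact ⟨x, hEq ▸ hx, y, hEq ▸ hy, hxy⟩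
      · rw [hEq]
        calc (S0 k ws A l r).card ≤ (A.filter fun a => r ≤ a.length).card :=
              Finset.card_image_le
          _ ≤ A.card := Finset.card_filter_le _ _
          _ ≤ G.card := hAcard
    · have hEq : Fl l r = insert (blk k ws l r (fixSeg (((wit r).take r).drop l)))
          (S0 k ws A l r) := by rw [hFl, Flev, if_neg hbr]
      -- the segment of the witness is nonempty
      obtain ⟨c, t, hct⟩ : ∃ c t, ((wit r).take r).drop l = c :: t := by
        refine List.exists_cons_of_ne_nil ?_
        have := hseglen l r (wit r) hwlen.ge
        intro h; rw [h] at this; simp at this; omega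
      have hxhead : (blk k ws l r (((wit r).take r).drop l)).head? = some c := by
        rw [blk_head k ws hlr hrm hleft (hseglen l r (wit r) hwlen.ge), hct]; rfl
      have hflen : (fixSeg (((wit r).take r).drop l)).length = r - l := by
        rw [fixSeg_length]; exact hseglen l r (wit r) hwlen.ge
      have hfhead : (blk k ws l r (fixSeg (((wit r).take r).drop l))).head? =
          some (flip' c) := by
        rw [blk_head k ws hlr hrm hleft hflen, hct]; rfl
      constructor
      · refine ⟨_, hEq ▸ Finset.mem_insert_self _ _, _,
          hEq ▸ Finset.mem_insert_of_mem hxstar, ?_⟩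
        rw [hfhead, hxhead]
        simp [flip'_ne hk c]
      · -- there is a word of A shorter than r
        have hproper : ∃ a ∈ A, ¬ (r ≤ a.length) := by
          by_contra hcon
          push_neg at hcon
          -- then l = p.length
          have hlp : l = p.length := by
            rcases hl with h | h
            · exact h
            · exfalso
              have := hcon (wit l) (hwitA l h)
              rw [hwitlen l h] at this
              omega
          -- all blocks share the same head
          push_neg at hbr
          have hsamehead : ∀ a ∈ A, (a.drop l).head? = some c := by
            intro a ha
            have haS : blk k ws l r ((a.take r).drop l) ∈ S0 k ws A l r :=
              Finset.mem_image_of_mem _ (Finset.mem_filter.mpr ⟨ha, hcon a ha⟩)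
            have := hbr _ haS _ hxstar
            rw [hheadblk l r hlr hrm a (hcon a ha)] at this
            rw [this, hxhead]
          -- so p ++ [c] is a common prefix, contradicting maximality
          have hpref : ∀ a ∈ A, p ++ [c] <+: a := by
            intro a ha
            obtain ⟨ta, hta⟩ := hpa a ha
            have hdrop : a.drop l = ta := by rw [← hta, hlp, List.drop_left]
            have hhead := hsamehead a ha
            rw [hdrop] at hhead
            obtain ⟨ta', rfl⟩ : ∃ ta', ta = c :: ta' := by
              cases ta with
              | nil => simp at hhead
              | cons x xs => simp only [List.head?_cons, Option.some.injEq] at hhead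
                             exact ⟨xs, by rw [hhead]⟩
            exact ⟨ta', by rw [← hta]; simp⟩
          have := hpmax (p ++ [c]) hpref
          simp at this
        have hss : (A.filter fun a => r ≤ a.length) ⊂ A := Finset.filter_ssubset.mpr hproper
        have hcardlt : (A.filter fun a => r ≤ a.length).card < A.card :=
          Finset.card_lt_card hss
        rw [hEq]
        calc (insert (blk k ws l r (fixSeg (((wit r).take r).drop l)))
              (S0 k ws A l r)).card ≤ (S0 k ws A l r).card + 1 := Finset.card_insert_le _ _
          _ ≤ (A.filter fun a => r ≤ a.length).card + 1 := by
              have : (S0 k ws A l r).card ≤ (A.filter fun a => r ≤ a.length).card :=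
                Finset.card_image_le
              omega
          _ ≤ A.card := by omega
          _ ≤ G.card := hAcard
  -- assemble
  refine ⟨s, Fs, ?_, ?_, ?_, ?_, ?_, ?_⟩
  · intro h
    rw [h] at hFslen
    exact hLsne (List.length_eq_zero_iff.mp hFslen.symm)
  · intro F hF
    obtain ⟨l, r, rfl, hl, hr, hlr⟩ := mem_buildF Fl Ls p.length hsorted F hF
    have hl' : l = p.length ∨ l ∈ LS := hl.imp id (hLsmem l)
    have hr' : r ∈ LS := hLsmem r hr
    obtain ⟨⟨x, hx, y, hy, hxy⟩, _⟩ := hpair l r hl' hr' hlr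
    constructor
    · constructor
      · exact Finset.one_lt_card.mpr ⟨x, hx, y, hy, fun h => hxy (h ▸ rfl)⟩
      · refine ⟨((((ws.drop l).take (r - l))).map List.length).sum, ?_⟩
        intro v hv
        obtain ⟨seg, hseg, rfl⟩ := hFmem l r hlr hr' v hv
        exact blk_length k ws l r hseg
    · intro u hu
      by_contra hune
      obtain ⟨c, u', rfl⟩ := List.exists_cons_of_ne_nil hune
      have h1 : x.head? = some c := by
        obtain ⟨tx, htx⟩ := hu x hx
        rw [← htx]; rfl
      have h2 : y.head? = some c := by
        obtain ⟨ty, hty⟩ := hu y hy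
        rw [← hty]; rfl
      exact hxy (h1.trans h2.symm)
  · rw [hFslen]; exact hLscard
  · intro F hF
    obtain ⟨l, r, rfl, hl, hr, hlr⟩ := mem_buildF Fl Ls p.length hsorted F hF
    exact (hpair l r (hl.imp id (hLsmem l)) (hLsmem r hr) hlr).2
  · -- G ⊆ basicSet
    intro g hg
    rw [Finset.mem_coe] at hg
    have hgG : g ∈ G := hg
    have haA : ag g ∈ A := Finset.mem_image_of_mem _ hgG
    have hgeq : g = csApply k w ws (ag g) := hag2 g hgG
    rw [basicSet_eq]
    by_cases hsh : (ag g).length ≤ p.length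
    · left
      rw [Set.mem_singleton_iff, hgeq, hpeq _ haA hsh]
    · right
      push_neg at hsh
      have hmemLS : (ag g).length ∈ LS := by
        rw [hLS, Finset.mem_filter]
        exact ⟨Finset.mem_image_of_mem _ haA, hsh⟩
      have hmemLs : (ag g).length ∈ Ls := (Finset.mem_sort _).mpr hmemLS
      obtain ⟨j, hj, hmemf⟩ := hcover Ls p.length hsorted hLsmem (ag g) haA
        (hpa _ haA).length_le hmemLs
      have htakep : (ag g).take p.length = p :=
        ((List.prefix_iff_eq_take.mp (hpa _ haA))).symm
      rw [htakep] at hmemf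
      refine Set.mem_iUnion₂.mpr ⟨j, Set.mem_Iio.mpr (hFslen ▸ hj : j < Fs.length), ?_⟩
      rw [hgeq]
      exact hmemf
  · -- basicSet ⊆ genTree
    intro x hx
    rw [basicSet_eq] at hx
    rcases hx with hx | hx
    · rw [Set.mem_singleton_iff] at hx
      exact ⟨p, hplen, hx⟩
    · obtain ⟨i, hi, hmem⟩ := Set.mem_iUnion₂.mp hx
      refine hsub Ls p.length hsorted hLsmem hplen (i + 1) {s} ?_ x hmem
      intro y hy
      rw [Set.mem_singleton_iff] at hy
      exact ⟨p, rfl, hy⟩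
end

section
/- Let k ≥ 2 and let B be a basic set of [k]^{<ℕ}. The generating sequence (s, F₀, …, F_{ℓ−1}) of B is unique: if (s', F'₀, …, F'_{ℓ'−1}) generates the same set B, then ℓ' = ℓ, s' = s, and F'ᵢ = Fᵢ for all i. -/
namespace Stmt13Aux

variable {k : ℕ}

/-- The folding step used in `basicSet`. -/
def stepF (k : ℕ) : Set (List (Fin k)) → Finset (List (Fin k)) → Set (List (Fin k)) :=
  fun A F => {x | ∃ u ∈ A, ∃ v ∈ F, x = u ++ v}

lemma foldl_mem_iff (L : List (Finset (List (Fin k)))) :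
    ∀ (A : Set (List (Fin k))) (x : List (Fin k)),
      x ∈ L.foldl (stepF k) A ↔ ∃ t ∈ A, x ∈ L.foldl (stepF k) {t} := by
  induction L with
  | nil => intro A x; simp
  | cons F L ih =>
    intro A x
    simp only [List.foldl_cons]
    rw [ih]
    constructor
    · rintro ⟨t, ⟨u, hu, v, hv, rfl⟩, hx⟩
      exact ⟨u, hu, (ih _ x).2 ⟨u ++ v, ⟨u, rfl, v, hv, rfl⟩, hx⟩⟩
    · rintro ⟨t, ht, hx⟩
      obtain ⟨y, ⟨u, hu, v, hv, rfl⟩, hx⟩ := (ih _ x).1 hx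
      cases hu
      exact ⟨t ++ v, ⟨t, ht, v, hv, rfl⟩, hx⟩

/-- A recursive version of `basicSet`. -/
def myB (k : ℕ) : List (Finset (List (Fin k))) → List (Fin k) → Set (List (Fin k))
  | [], s => {s}
  | F :: L, s => {s} ∪ ⋃ v ∈ F, myB k L (s ++ v)

lemma basicSet_nil (s : List (Fin k)) : basicSet k s [] = {s} := by
  simp [basicSet]

lemma basicSet_cons (s : List (Fin k)) (F : Finset (List (Fin k)))
    (L : List (Finset (List (Fin k)))) :
    basicSet k s (F :: L) = {s} ∪ ⋃ v ∈ F, basicSet k (s ++ v) L := by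
  ext x
  simp only [basicSet, Set.mem_union, Set.mem_singleton_iff, Set.mem_iUnion, Set.mem_Iio,
    List.length_cons]
  constructor
  · rintro (rfl | ⟨i, hi, hx⟩)
    · exact Or.inl rfl
    · rw [List.take_succ_cons, List.foldl_cons] at hx
      have hx' := (foldl_mem_iff _ _ _).1 hx
      obtain ⟨t, ⟨u, hu, v, hv, rfl⟩, hx'⟩ := hx'
      cases hu
      right
      refine ⟨v, hv, ?_⟩
      cases i with
      | zero =>
        simp only [List.take_zero, List.foldl_nil, Set.mem_singleton_iff] at hx'
        exact Or.inl hx'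
      | succ j =>
        exact Or.inr ⟨j, by omega, hx'⟩
  · rintro (rfl | ⟨v, hv, hx⟩)
    · exact Or.inl rfl
    · right
      rcases hx with rfl | ⟨j, hj, hx⟩
      · refine ⟨0, by omega, ?_⟩
        rw [List.take_succ_cons, List.foldl_cons]
        exact (foldl_mem_iff _ _ _).2 ⟨s ++ v, ⟨s, rfl, v, hv, rfl⟩, by simp⟩
      · refine ⟨j + 1, by omega, ?_⟩
        rw [List.take_succ_cons, List.foldl_cons]
        exact (foldl_mem_iff _ _ _).2 ⟨s ++ v, ⟨s, rfl, v, hv, rfl⟩, hx⟩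

lemma basicSet_eq_myB (L : List (Finset (List (Fin k)))) :
    ∀ s : List (Fin k), basicSet k s L = myB k L s := by
  induction L with
  | nil => intro s; rw [basicSet_nil]; rfl
  | cons F L ih =>
    intro s
    rw [basicSet_cons, myB]
    simp only [ih]

/-- All flats in the list are nonempty with a common positive word length. -/
def Good (k : ℕ) (L : List (Finset (List (Fin k)))) : Prop :=
  ∀ F ∈ L, F.Nonempty ∧ ∃ n, 0 < n ∧ ∀ w ∈ F, w.length = n

lemma flat_good {F : Finset (List (Fin k))} (h : IsFlat k F) :
    F.Nonempty ∧ ∃ n, 0 < n ∧ ∀ w ∈ F, w.length = n := by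
  obtain ⟨hc, n, hn⟩ := h
  have hne : F.Nonempty := Finset.card_pos.1 (by omega)
  refine ⟨hne, n, ?_, hn⟩
  by_contra hn0
  push_neg at hn0
  interval_cases n
  obtain ⟨a, ha, b, hb, hab⟩ := Finset.one_lt_card.1 (by omega : 1 < F.card)
  exact hab (by rw [List.length_eq_zero_iff.1 (hn a ha), List.length_eq_zero_iff.1 (hn b hb)])

lemma myB_self (L : List (Finset (List (Fin k)))) (s : List (Fin k)) :
    s ∈ myB k L s := by
  cases L with
  | nil => rfl
  | cons F L => exact Or.inl rfl

lemma mem_myB_len (L : List (Finset (List (Fin k)))) (hg : Good k L) :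
    ∀ (s x : List (Fin k)), x ∈ myB k L s →
      s.length ≤ x.length ∧ (x.length ≤ s.length → x = s) := by
  induction L with
  | nil =>
    intro s x hx
    cases hx
    exact ⟨le_rfl, fun _ => rfl⟩
  | cons F L ih =>
    intro s x hx
    rcases hx with rfl | hx
    · exact ⟨le_rfl, fun _ => rfl⟩
    · simp only [Set.mem_iUnion] at hx
      obtain ⟨v, hv, hx⟩ := hx
      obtain ⟨_, n, hn, hlen⟩ := hg F List.mem_cons_self
      have hvlen : v.length = n := hlen v hv
      have h1 := ih (fun G hG => hg G (List.mem_cons_of_mem _ hG)) (s ++ v) x hx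
      rw [List.length_append] at h1
      constructor
      · omega
      · intro h; omega

lemma myB_prefix (L : List (Finset (List (Fin k)))) :
    ∀ (s x : List (Fin k)), x ∈ myB k L s → s <+: x := by
  induction L with
  | nil =>
    intro s x hx; cases hx; exact List.prefix_refl _
  | cons F L ih =>
    intro s x hx
    rcases hx with rfl | hx
    · exact List.prefix_refl _
    · simp only [Set.mem_iUnion] at hx
      obtain ⟨v, _, hx⟩ := hx
      exact (List.prefix_append s v).trans (ih _ _ hx)

lemma myB_inj (L : List (Finset (List (Fin k)))) :
    ∀ (L' : List (Finset (List (Fin k)))) (s : List (Fin k)),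
      Good k L → Good k L' → myB k L s = myB k L' s → L = L' := by
  induction L with
  | nil =>
    intro L' s _ hg' h
    cases L' with
    | nil => rfl
    | cons G M =>
      exfalso
      obtain ⟨⟨w, hw⟩, n, hn, hlen⟩ := hg' G List.mem_cons_self
      have hmem : s ++ w ∈ myB k (G :: M) s :=
        Or.inr (Set.mem_iUnion.2 ⟨w, Set.mem_iUnion.2 ⟨hw, myB_self _ _⟩⟩)
      rw [← h] at hmem
      have : s ++ w = s := hmem
      have := congrArg List.length this
      simp only [List.length_append] at this
      have := hlen w hw
      omega
  | cons F M ih =>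
    intro L' s hg hg' h
    cases L' with
    | cons G M' => ?_
    | nil =>
      exfalso
      obtain ⟨⟨w, hw⟩, n, hn, hlen⟩ := hg F List.mem_cons_self
      have hmem : s ++ w ∈ myB k (F :: M) s :=
        Or.inr (Set.mem_iUnion.2 ⟨w, Set.mem_iUnion.2 ⟨hw, myB_self _ _⟩⟩)
      rw [h] at hmem
      have : s ++ w = s := hmem
      have := congrArg List.length this
      simp only [List.length_append] at this
      have := hlen w hw
      omega
    -- both cons
    obtain ⟨⟨v₀, hv₀⟩, nF, hnF, hlF⟩ := hg F List.mem_cons_self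
    obtain ⟨⟨w₀, hw₀⟩, nG, hnG, hlG⟩ := hg' G List.mem_cons_self
    have hgM : Good k M := fun X hX => hg X (List.mem_cons_of_mem _ hX)
    have hgM' : Good k M' := fun X hX => hg' X (List.mem_cons_of_mem _ hX)
    -- membership transfer lemma, F-side to G-side
    have key : ∀ {v : List (Fin k)}, v ∈ F → ∃ w ∈ G, s ++ v ∈ myB k M' (s ++ w) := by
      intro v hv
      have hmem : s ++ v ∈ myB k (F :: M) s :=
        Or.inr (Set.mem_iUnion.2 ⟨v, Set.mem_iUnion.2 ⟨hv, myB_self _ _⟩⟩)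
      rw [h] at hmem
      rcases hmem with heq' | hmem
      · exfalso
        have : s ++ v = s := heq'
        have := congrArg List.length this
        simp only [List.length_append] at this
        have := hlF v hv
        omega
      · simp only [Set.mem_iUnion] at hmem
        obtain ⟨w, hw, hmem⟩ := hmem
        exact ⟨w, hw, hmem⟩
    have key' : ∀ {w : List (Fin k)}, w ∈ G → ∃ v ∈ F, s ++ w ∈ myB k M (s ++ v) := by
      intro w hw
      have hmem : s ++ w ∈ myB k (G :: M') s :=
        Or.inr (Set.mem_iUnion.2 ⟨w, Set.mem_iUnion.2 ⟨hw, myB_self _ _⟩⟩)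
      rw [← h] at hmem
      rcases hmem with heq' | hmem
      · exfalso
        have : s ++ w = s := heq'
        have := congrArg List.length this
        simp only [List.length_append] at this
        have := hlG w hw
        omega
      · simp only [Set.mem_iUnion] at hmem
        obtain ⟨v, hv, hmem⟩ := hmem
        exact ⟨v, hv, hmem⟩
    -- equal lengths
    have hnFG : nF = nG := by
      obtain ⟨w, hw, hmem⟩ := key hv₀
      have h1 := (mem_myB_len M' hgM' _ _ hmem).1
      obtain ⟨v, hv, hmem'⟩ := key' hw₀
      have h2 := (mem_myB_len M hgM _ _ hmem').1
      have := hlF v₀ hv₀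
      have := hlG w hw
      have := hlG w₀ hw₀
      have := hlF v hv
      simp only [List.length_append] at h1 h2
      omega
    -- F = G
    have hFG : F = G := by
      apply Finset.Subset.antisymm
      · intro v hv
        obtain ⟨w, hw, hmem⟩ := key hv
        have h2 := (mem_myB_len M' hgM' _ _ hmem).2
        have hvw : s ++ v = s ++ w := by
          apply h2
          simp only [List.length_append]
          have := hlF v hv
          have := hlG w hw
          omega
        rwa [List.append_cancel_left hvw]
      · intro w hw
        obtain ⟨v, hv, hmem⟩ := key' hw
        have h2 := (mem_myB_len M hgM _ _ hmem).2
        have hvw : s ++ w = s ++ v := by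
          apply h2
          simp only [List.length_append]
          have := hlF v hv
          have := hlG w hw
          omega
        rwa [List.append_cancel_left hvw]
    subst hFG
    -- M = M'
    have hMM : myB k M (s ++ v₀) = myB k M' (s ++ v₀) := by
      ext x
      constructor
      · intro hx
        have hmem : x ∈ myB k (F :: M) s :=
          Or.inr (Set.mem_iUnion.2 ⟨v₀, Set.mem_iUnion.2 ⟨hv₀, hx⟩⟩)
        rw [h] at hmem
        rcases hmem with heq' | hmem
        · exfalso
          have hx' := (mem_myB_len M hgM _ _ hx).1
          have : x = s := heq'
          subst this
          simp only [List.length_append] at hx'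
          have := hlF v₀ hv₀
          omega
        · simp only [Set.mem_iUnion] at hmem
          obtain ⟨w, hw, hmem⟩ := hmem
          have hp1 : s ++ w <+: x := myB_prefix M' _ _ hmem
          have hp2 : s ++ v₀ <+: x := myB_prefix M _ _ hx
          have hlen : (s ++ w).length = (s ++ v₀).length := by
            simp only [List.length_append]
            have := hlF v₀ hv₀
            have := hlG w hw
            omega
          have : s ++ w = s ++ v₀ :=
            (List.prefix_of_prefix_length_le hp1 hp2 (le_of_eq hlen)).eq_of_length hlen
          rwa [this] at hmem
      · intro hx
        have hmem : x ∈ myB k (F :: M') s :=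
          Or.inr (Set.mem_iUnion.2 ⟨v₀, Set.mem_iUnion.2 ⟨hv₀, hx⟩⟩)
        rw [← h] at hmem
        rcases hmem with heq' | hmem
        · exfalso
          have hx' := (mem_myB_len M' hgM' _ _ hx).1
          have : x = s := heq'
          subst this
          simp only [List.length_append] at hx'
          have := hlF v₀ hv₀
          omega
        · simp only [Set.mem_iUnion] at hmem
          obtain ⟨v, hv, hmem⟩ := hmem
          have hp1 : s ++ v <+: x := myB_prefix M _ _ hmem
          have hp2 : s ++ v₀ <+: x := myB_prefix M' _ _ hx
          have hlen : (s ++ v).length = (s ++ v₀).length := by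
            simp only [List.length_append]
            have := hlF v₀ hv₀
            have := hlF v hv
            omega
          have : s ++ v = s ++ v₀ :=
            (List.prefix_of_prefix_length_le hp1 hp2 (le_of_eq hlen)).eq_of_length hlen
          rwa [this] at hmem
    rw [ih M' (s ++ v₀) hgM hgM' hMM]

end Stmt13Aux

/-- The generating sequence `(s, F₀,…,F_{ℓ−1})` of a basic set is
unique: if two generating sequences produce the same basic set, they coincide. -/
theorem stmt_13 (k : ℕ) (hk : 2 ≤ k) (s s' : List (Fin k))
    (Fs Fs' : List (Finset (List (Fin k))))
    (hFs : Fs ≠ []) (hFs' : Fs' ≠ [])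
    (hflat : ∀ F ∈ Fs, IsFlat k F ∧ InfEmpty k F)
    (hflat' : ∀ F ∈ Fs', IsFlat k F ∧ InfEmpty k F)
    (heq : basicSet k s Fs = basicSet k s' Fs') :
    s = s' ∧ Fs = Fs' := by
  open Stmt13Aux in
  have hg : Good k Fs := fun F hF => flat_good (hflat F hF).1
  have hg' : Good k Fs' := fun F hF => flat_good (hflat' F hF).1
  rw [basicSet_eq_myB, basicSet_eq_myB] at heq
  have hs' : s' ∈ Stmt13Aux.myB k Fs s := by rw [heq]; exact myB_self _ _
  have hs : s ∈ Stmt13Aux.myB k Fs' s' := by rw [← heq]; exact myB_self _ _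
  have h1 := mem_myB_len Fs hg _ _ hs'
  have h2 := mem_myB_len Fs' hg' _ _ hs
  have hss : s = s' := (h2.2 (by omega)).symm.symm
  subst hss
  exact ⟨rfl, myB_inj Fs Fs' s hg hg' heq⟩
end

section
/- Let k ≥ 2, let n ≥ 3, and let F ⊆ [k]^{<ℕ} with |F| = n. Then F is a free set if and only if F admits an enumeration {w₁,…,wₙ} such that |w₁| < |w₂| < … < |w_{n−1}| ≤ |wₙ| and, for every i ∈ {1,…,n−2}, |wᵢ| < |∧{w_{i+1},…,wₙ}|. -/
/-- The families `Frₙ` of free sets of `[k]^{<ℕ}`: `Fr₁` consists of all singletons,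
`Fr₂` of all doubletons, and `Fr_{n+1}` (for `n ≥ 2`) of all sets `{w} ∪ G` with
`G ∈ Frₙ` and `|w| < |∧G|` (expressed as: `G` has a common initial segment longer
than `w`). A set is free if it belongs to some `Frₙ`. -/
inductive Fr (k : ℕ) : ℕ → Finset (List (Fin k)) → Prop
  | single (w : List (Fin k)) : Fr k 1 {w}
  | pair (w u : List (Fin k)) (h : w ≠ u) : Fr k 2 {w, u}
  | cons (n : ℕ) (hn : 2 ≤ n) (w : List (Fin k)) (G : Finset (List (Fin k)))
      (hG : Fr k n G)
      (h : ∃ u : List (Fin k), (∀ g ∈ G, u <+: g) ∧ w.length < u.length) :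
      Fr k (n + 1) (insert w G)

lemma Fr.card_eq {k m : ℕ} {F : Finset (List (Fin k))} (h : Fr k m F) : F.card = m := by
  induction h with
  | single w => simp
  | pair w u h => exact Finset.card_pair h
  | cons n hn w G hG h ih =>
    obtain ⟨u, hu, hlen⟩ := h
    have hwG : w ∉ G := fun hw => absurd (hu w hw).length_le (by omega)
    rw [Finset.card_insert_of_notMem hwG, ih]

lemma base3 {k : ℕ} (w a b : List (Fin k)) (hab : a ≠ b) (hlen : a.length ≤ b.length)
    (u : List (Fin k)) (hua : u <+: a) (hub : u <+: b) (hwu : w.length < u.length) :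
    ∃ ws : ℕ → List (Fin k),
      insert w {a, b} = (Finset.range 3).image ws ∧
      (∀ i, i + 3 ≤ 3 → (ws i).length < (ws (i + 1)).length) ∧
      (ws (3 - 2)).length ≤ (ws (3 - 1)).length ∧
      (∀ i, i + 3 ≤ 3 → ∃ u' : List (Fin k),
        (∀ j, i < j → j < 3 → u' <+: ws j) ∧ (ws i).length < u'.length) := by
  refine ⟨fun i => match i with | 0 => w | 1 => a | _ + 2 => b, ?_, ?_, ?_, ?_⟩
  · ext x
    simp only [Finset.mem_insert, Finset.mem_singleton, Finset.mem_image, Finset.mem_range]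
    constructor
    · rintro (rfl | rfl | rfl)
      exacts [⟨0, by omega, rfl⟩, ⟨1, by omega, rfl⟩, ⟨2, by omega, rfl⟩]
    · rintro ⟨i, hi, rfl⟩
      interval_cases i <;> simp
  · intro i hi
    have : i = 0 := by omega
    subst this
    exact lt_of_lt_of_le hwu hua.length_le
  · exact hlen
  · intro i hi
    have : i = 0 := by omega
    subst this
    refine ⟨u, fun j h1 h2 => ?_, hwu⟩
    interval_cases j
    · exact hua
    · exact hub

lemma Fr.enum {k m : ℕ} {F : Finset (List (Fin k))} (hFr : Fr k m F) (hm : 3 ≤ m) :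
    ∃ ws : ℕ → List (Fin k),
      F = (Finset.range m).image ws ∧
      (∀ i, i + 3 ≤ m → (ws i).length < (ws (i + 1)).length) ∧
      (ws (m - 2)).length ≤ (ws (m - 1)).length ∧
      (∀ i, i + 3 ≤ m → ∃ u : List (Fin k),
        (∀ j, i < j → j < m → u <+: ws j) ∧ (ws i).length < u.length) := by
  induction hFr with
  | single w => omega
  | pair w u h => omega
  | cons n hn w G hG h ih =>
    obtain ⟨u, hu, hul⟩ := h
    rcases eq_or_lt_of_le hn with heq | hlt
    · -- n = 2
      subst heq
      cases hG with
      | pair a b hab =>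
        rcases le_total a.length b.length with h' | h'
        · exact base3 w a b hab h' u (hu a (by simp)) (hu b (by simp)) hul
        · rw [Finset.pair_comm]
          exact base3 w b a hab.symm h' u (hu b (by simp)) (hu a (by simp)) hul
      | cons n' hn' w' G' hG' h' => omega
    · -- 3 ≤ n
      obtain ⟨ws', hGeq, hinc, hlast, hpre⟩ := ih hlt
      refine ⟨fun i => match i with | 0 => w | j + 1 => ws' j, ?_, ?_, ?_, ?_⟩
      · ext x
        simp only [Finset.mem_insert, hGeq, Finset.mem_image, Finset.mem_range]
        constructor
        · rintro (rfl | ⟨i, hi, rfl⟩)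
          exacts [⟨0, by omega, rfl⟩, ⟨i + 1, by omega, rfl⟩]
        · rintro ⟨i, hi, rfl⟩
          cases i with
          | zero => exact Or.inl rfl
          | succ j => exact Or.inr ⟨j, by omega, rfl⟩
      · intro i hi
        cases i with
        | zero =>
          have hmem : ws' 0 ∈ G := by
            rw [hGeq]; exact Finset.mem_image.mpr ⟨0, by simp; omega, rfl⟩
          exact lt_of_lt_of_le hul (hu _ hmem).length_le
        | succ j => exact hinc j (by omega)
      · have e1 : n + 1 - 2 = (n - 2) + 1 := by omega
        have e2 : n + 1 - 1 = (n - 1) + 1 := by omega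
        rw [e1, e2]
        exact hlast
      · intro i hi
        cases i with
        | zero =>
          refine ⟨u, fun j h1 h2 => ?_, hul⟩
          cases j with
          | zero => omega
          | succ j' =>
            exact hu _ (by rw [hGeq]; exact Finset.mem_image.mpr ⟨j', by simp; omega, rfl⟩)
        | succ i' =>
          obtain ⟨u', hu', hl'⟩ := hpre i' (by omega)
          refine ⟨u', fun j h1 h2 => ?_, hl'⟩
          cases j with
          | zero => omega
          | succ j' => exact hu' j' (by omega) (by omega)

lemma Fr.of_enum {k : ℕ} : ∀ n, 2 ≤ n → ∀ ws : ℕ → List (Fin k),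
    ws (n - 2) ≠ ws (n - 1) →
    (∀ i, i + 3 ≤ n → ∃ u : List (Fin k),
      (∀ j, i < j → j < n → u <+: ws j) ∧ (ws i).length < u.length) →
    Fr k n ((Finset.range n).image ws) := by
  intro n hn
  induction n, hn using Nat.le_induction with
  | base =>
    intro ws hne _
    have himg : (Finset.range 2).image ws = {ws 0, ws 1} := by
      ext x
      simp only [Finset.mem_image, Finset.mem_range, Finset.mem_insert, Finset.mem_singleton]
      constructor
      · rintro ⟨i, hi, rfl⟩; interval_cases i <;> simp
      · rintro (rfl | rfl); exacts [⟨0, by omega, rfl⟩, ⟨1, by omega, rfl⟩]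
    rw [himg]
    exact Fr.pair _ _ hne
  | succ n hn ih =>
    intro ws hne hpre
    have hG : Fr k n ((Finset.range n).image (fun i => ws (i + 1))) := by
      apply ih
      · have e1 : n - 2 + 1 = n - 1 := by omega
        have e2 : n - 1 + 1 = n := by omega
        have e3 : n + 1 - 2 = n - 1 := by omega
        have e4 : n + 1 - 1 = n := by omega
        rw [e3, e4] at hne
        show ws (n - 2 + 1) ≠ ws (n - 1 + 1)
        rw [e1, e2]; exact hne
      · intro i hi
        obtain ⟨u, hu, hl⟩ := hpre (i + 1) (by omega)
        exact ⟨u, fun j h1 h2 => hu (j + 1) (by omega) (by omega), hl⟩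
    have himg : (Finset.range (n + 1)).image ws
        = insert (ws 0) ((Finset.range n).image (fun i => ws (i + 1))) := by
      ext x
      simp only [Finset.mem_image, Finset.mem_range, Finset.mem_insert]
      constructor
      · rintro ⟨i, hi, rfl⟩
        cases i with
        | zero => exact Or.inl rfl
        | succ j => exact Or.inr ⟨j, by omega, rfl⟩
      · rintro (rfl | ⟨j, hj, rfl⟩)
        exacts [⟨0, by omega, rfl⟩, ⟨j + 1, by omega, rfl⟩]
    rw [himg]
    obtain ⟨u, hu, hl⟩ := hpre 0 (by omega)
    refine Fr.cons n hn (ws 0) _ hG ⟨u, fun g hg => ?_, hl⟩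
    obtain ⟨j, hj, rfl⟩ := Finset.mem_image.mp hg
    exact hu (j + 1) (by omega) (by simp at hj; omega)

/-- Let `k ≥ 2`, `n ≥ 3` and `F ⊆ [k]^{<ℕ}` with `|F| = n`. Then `F`
is free iff it admits an enumeration `w₀,…,w_{n−1}` with
`|w₀| < … < |w_{n−2}| ≤ |w_{n−1}|` and, for every `i ≤ n−3`,
`|wᵢ| < |∧{w_{i+1},…,w_{n−1}}|` (i.e. `{w_{i+1},…,w_{n−1}}` has a common initial
segment longer than `wᵢ`). -/
theorem stmt_15 (k n : ℕ) (hk : 2 ≤ k) (hn : 3 ≤ n)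
    (F : Finset (List (Fin k))) (hF : F.card = n) :
    (∃ m, Fr k m F) ↔
      ∃ ws : ℕ → List (Fin k),
        F = (Finset.range n).image ws ∧
        (∀ i, i + 3 ≤ n → (ws i).length < (ws (i + 1)).length) ∧
        (ws (n - 2)).length ≤ (ws (n - 1)).length ∧
        (∀ i, i + 3 ≤ n → ∃ u : List (Fin k),
          (∀ j, i < j → j < n → u <+: ws j) ∧ (ws i).length < u.length) := by
  constructor
  · rintro ⟨m, hFr⟩
    have hc := hFr.card_eq
    have hmn : m = n := by omega
    subst hmn
    exact hFr.enum hn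
  · rintro ⟨ws, hFeq, hinc, hlast, hpre⟩
    refine ⟨n, ?_⟩
    rw [hFeq]
    have hinj : Set.InjOn ws (Finset.range n) :=
      Finset.card_image_iff.mp (by rw [← hFeq, hF, Finset.card_range])
    refine Fr.of_enum n (by omega) ws ?_ hpre
    intro heq
    have := hinj (by simp; omega : n - 2 ∈ (Finset.range n : Finset ℕ))
      (by simp; omega : n - 1 ∈ (Finset.range n : Finset ℕ)) heq
    omega
end

section
/- Let k, d ≥ 1 with k ≥ 2, let W be a d-dimensional Carlson–Simpson tree of [k]^{<ℕ}, and let n ≥ 1. Then W contains a free set of cardinality n if and only if n − 1 ≤ d. Moreover, for every F ⊆ [k]^{<d+1}, F is free if and only if I_W(F) is free, where I_W is the canonical isomorphism. -/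
section Aux
variable {k : ℕ}

lemma subst_length (vw : List (Option (Fin k))) (a : Fin k) :
    (subst k vw a).length = vw.length := by simp [subst]

lemma leftVar_len {vw : List (Option (Fin k))} (h : IsLeftVar k vw) : 1 ≤ vw.length := by
  obtain ⟨t, rfl⟩ := h; simp

lemma csApply_nil (w : List (Fin k)) (ws : List (List (Option (Fin k)))) :
    csApply k w ws [] = w := by
  simp [csApply]

lemma csApply_cons (w : List (Fin k)) (v : List (Option (Fin k))) ws (a : Fin k) as :
    csApply k w (v :: ws) (a :: as) = csApply k (w ++ subst k v a) ws as := by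
  simp [csApply]

lemma prefix_w (w : List (Fin k)) ws as : w <+: csApply k w ws as :=
  List.prefix_append _ _

lemma len_le : ∀ (as bs : List (Fin k)) (ws) (w₁ w₂ : List (Fin k)),
    w₁.length = w₂.length → as.length ≤ bs.length → bs.length ≤ ws.length →
    (csApply k w₁ ws as).length ≤ (csApply k w₂ ws bs).length
  | [], bs, ws, w₁, w₂, hw, _, _ => by
      rw [csApply_nil, hw]
      exact (prefix_w w₂ ws bs).length_le
  | a :: as, [], ws, w₁, w₂, hw, hab, hbw => by simp at hab
  | a :: as, b :: bs, [], w₁, w₂, hw, hab, hbw => by simp at hbw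
  | a :: as, b :: bs, v :: ws, w₁, w₂, hw, hab, hbw => by
      rw [csApply_cons, csApply_cons]
      exact len_le as bs ws _ _ (by simp [subst_length, hw]) (by simpa using hab)
        (by simpa using hbw)

lemma len_lt : ∀ (as bs : List (Fin k)) (ws) (w₁ w₂ : List (Fin k)),
    (∀ v ∈ ws, IsLeftVar k v) →
    w₁.length = w₂.length → as.length < bs.length → bs.length ≤ ws.length →
    (csApply k w₁ ws as).length < (csApply k w₂ ws bs).length
  | as, [], ws, w₁, w₂, hl, hw, hab, hbw => by simp at hab
  | as, b :: bs, [], w₁, w₂, hl, hw, hab, hbw => by simp at hbw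
  | [], b :: bs, v :: ws, w₁, w₂, hl, hw, hab, hbw => by
      rw [csApply_nil, csApply_cons]
      calc w₁.length < (w₂ ++ subst k v b).length := by
            simp [subst_length, hw]
            exact leftVar_len (hl v (by simp))
        _ ≤ _ := (prefix_w _ ws bs).length_le
  | a :: as, b :: bs, v :: ws, w₁, w₂, hl, hw, hab, hbw => by
      rw [csApply_cons, csApply_cons]
      exact len_lt as bs ws _ _ (fun v hv => hl v (by simp [hv]))
        (by simp [subst_length, hw]) (by simpa using hab) (by simpa using hbw)

lemma len_eq (as bs : List (Fin k)) ws (w : List (Fin k))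
    (h : as.length = bs.length) (hbw : bs.length ≤ ws.length) :
    (csApply k w ws as).length = (csApply k w ws bs).length :=
  le_antisymm (len_le as bs ws w w rfl h.le hbw)
    (len_le bs as ws w w rfl h.ge (h ▸ hbw))

lemma pref : ∀ (as cs : List (Fin k)) (ws) (w : List (Fin k)),
    as.length ≤ ws.length →
    csApply k w ws as <+: csApply k w ws (as ++ cs)
  | [], cs, ws, w, h => by rw [csApply_nil]; exact prefix_w w ws cs
  | a :: as, cs, [], w, h => by simp at h
  | a :: as, cs, v :: ws, w, h => by
      rw [List.cons_append, csApply_cons, csApply_cons]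
      exact pref as cs ws _ (by simpa using h)

lemma pref' {as bs : List (Fin k)} {ws} (w : List (Fin k))
    (h : as <+: bs) (haw : as.length ≤ ws.length) :
    csApply k w ws as <+: csApply k w ws bs := by
  obtain ⟨cs, rfl⟩ := h
  exact pref as cs ws w haw

end Aux
section Aux2
variable {k : ℕ}

lemma head_eq {v : List (Option (Fin k))} (hv : IsLeftVar k v)
    (ws : List (List (Option (Fin k))))
    (w : List (Fin k)) (a b : Fin k) (as bs p : List (Fin k))
    (hpa : p <+: csApply k w (v :: ws) (a :: as))
    (hpb : p <+: csApply k w (v :: ws) (b :: bs))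
    (hlp : w.length < p.length) : a = b := by
  obtain ⟨tv, rfl⟩ := hv
  have ea : csApply k w ((none :: tv) :: ws) (a :: as) =
      w ++ a :: ((tv.map fun l => l.getD a) ++ (List.zipWith (subst k) ws as).flatten) := by
    simp [csApply, subst]
  have eb : csApply k w ((none :: tv) :: ws) (b :: bs) =
      w ++ b :: ((tv.map fun l => l.getD b) ++ (List.zipWith (subst k) ws bs).flatten) := by
    simp [csApply, subst]
  rw [ea] at hpa; rw [eb] at hpb
  have h1 := hpa.getElem hlp
  have h2 := hpb.getElem hlp
  rw [List.getElem_append_right (le_refl w.length)] at h1 h2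
  simp at h1 h2
  rw [← h1, ← h2]

lemma takeAgree : ∀ (t : ℕ) (ws : List (List (Option (Fin k))))
    (as bs w p : List (Fin k)),
    (∀ v ∈ ws, IsLeftVar k v) →
    t < as.length → t < bs.length → as.length ≤ ws.length → bs.length ≤ ws.length →
    p <+: csApply k w ws as → p <+: csApply k w ws bs →
    (csApply k w ws (as.take t)).length < p.length →
    as.take (t + 1) = bs.take (t + 1)
  | t, ws, [], bs, w, p, _, ha, _, _, _, _, _, _ => by simp at ha
  | t, ws, a :: as, [], w, p, _, _, hb, _, _, _, _, _ => by simp at hb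
  | t, [], a :: as, b :: bs, w, p, _, _, _, haw, _, _, _, _ => by simp at haw
  | 0, v :: ws, a :: as, b :: bs, w, p, hl, ha, hb, haw, hbw, hpa, hpb, hlt => by
      rw [List.take_zero, csApply_nil] at hlt
      have : a = b := head_eq (hl v (by simp)) ws w a b as bs p hpa hpb hlt
      simp [this]
  | t + 1, v :: ws, a :: as, b :: bs, w, p, hl, ha, hb, haw, hbw, hpa, hpb, hlt => by
      have hwp : w.length < p.length := by
        refine lt_of_le_of_lt ?_ hlt
        exact (prefix_w w (v :: ws) ((a :: as).take (t+1))).length_le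
      have hab : a = b := head_eq (hl v (by simp)) ws w a b as bs p hpa hpb hwp
      subst hab
      rw [csApply_cons] at hpa hpb
      rw [List.take_succ_cons, csApply_cons] at hlt
      have := takeAgree t ws as bs (w ++ subst k v a) p
        (fun v hv => hl v (by simp [hv])) (by simpa using ha) (by simpa using hb)
        (by simpa using haw) (by simpa using hbw) hpa hpb hlt
      simp [List.take_succ_cons, this]

end Aux2
section Aux3
variable {k : ℕ}

lemma csApply_inj {ws : List (List (Option (Fin k)))} {w as bs : List (Fin k)}
    (hl : ∀ v ∈ ws, IsLeftVar k v)
    (haw : as.length ≤ ws.length) (hbw : bs.length ≤ ws.length)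
    (h : csApply k w ws as = csApply k w ws bs) : as = bs := by
  have hlen : as.length = bs.length := by
    by_contra hne
    rcases Nat.lt_or_ge as.length bs.length with hlt | hge
    · exact absurd (congrArg List.length h)
        (Nat.ne_of_lt (len_lt as bs ws w w hl rfl hlt hbw))
    · have : bs.length < as.length := lt_of_le_of_ne hge (fun e => hne e.symm)
      exact absurd (congrArg List.length h).symm
        (Nat.ne_of_lt (len_lt bs as ws w w hl rfl this haw))
  rcases as with _ | ⟨a, as'⟩
  · simp at hlen; exact (List.length_eq_zero_iff.mp hlen.symm).symm
  · have hbl : bs.length = as'.length + 1 := by simpa using hlen.symm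
    have h1 : (a :: as').take (as'.length + 1) = bs.take (as'.length + 1) :=
      takeAgree as'.length ws (a :: as') bs w (csApply k w ws (a :: as')) hl
        (by simp) (by omega) haw hbw List.prefix_rfl (h ▸ List.prefix_rfl)
        (len_lt _ _ ws w w hl rfl (by rw [List.length_take]; omega) haw)
    rw [List.take_of_length_le (by simp), List.take_of_length_le (by omega)] at h1
    exact h1

lemma Fr_card {n : ℕ} {S : Finset (List (Fin k))} (h : Fr k n S) : S.card = n := by
  induction h with
  | single w => simp
  | pair w u h => rw [Finset.card_insert_of_notMem (by simpa using h), Finset.card_singleton]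
  | cons n hn w G hG hwit ih =>
      obtain ⟨u, hu, hwu⟩ := hwit
      have hwG : w ∉ G := by
        intro hw
        exact absurd (hu w hw).length_le (by omega)
      rw [Finset.card_insert_of_notMem hwG, ih]

lemma Fr_pos {n : ℕ} {S : Finset (List (Fin k))} (h : Fr k n S) : 1 ≤ n := by
  cases h <;> omega

lemma Fr_of_card_one {S : Finset (List (Fin k))} (h : S.card = 1) : Fr k 1 S := by
  obtain ⟨x, rfl⟩ := Finset.card_eq_one.mp h
  exact Fr.single x

lemma Fr_of_card_two {S : Finset (List (Fin k))} (h : S.card = 2) : Fr k 2 S := by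
  obtain ⟨x, y, hxy, rfl⟩ := Finset.card_eq_two.mp h
  exact Fr.pair x y hxy

end Aux3
section Aux4
variable {k : ℕ}

lemma key (ws : List (List (Option (Fin k)))) (w : List (Fin k))
    (hl : ∀ v ∈ ws, IsLeftVar k v) {n : ℕ} {F : Finset (List (Fin k))}
    (hFr : Fr k n F) :
    ∀ c : List (Fin k),
      (∀ g ∈ F, ∃ as, as.length ≤ ws.length ∧ g = csApply k w ws as ∧ c <+: as) →
      n + c.length ≤ ws.length + 1 := by
  induction hFr with
  | single x =>
      intro c hc
      obtain ⟨as, h1, h2, h3⟩ := hc x (by simp)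
      have := h3.length_le
      omega
  | pair x y hxy =>
      intro c hc
      obtain ⟨as, ha1, ha2, ha3⟩ := hc x (by simp)
      obtain ⟨bs, hb1, hb2, hb3⟩ := hc y (by simp)
      by_contra hcon
      have h1 : ws.length ≤ c.length := by omega
      have e1 : c = as := ha3.eq_of_length_le (by omega)
      have e2 : c = bs := hb3.eq_of_length_le (by omega)
      exact hxy (by rw [ha2, hb2, ← e1, ← e2])
  | cons n hn w₀ G hG hwit ih =>
      intro c hcc
      obtain ⟨asw, hw1, hw2, hw3⟩ := hcc w₀ (Finset.mem_insert_self _ _)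
      have hGcard := Fr_card hG
      have hGne : G.Nonempty := by rw [← Finset.card_pos, hGcard]; omega
      obtain ⟨g₀, hg₀⟩ := hGne
      choose asf hf1 hf2 hf3 using fun g (hg : g ∈ G) => hcc g (Finset.mem_insert_of_mem hg)
      obtain ⟨u, hu, hwu⟩ := hwit
      set m := asw.length with hm
      have hmlt : ∀ g (hg : g ∈ G), m < (asf g hg).length := by
        intro g hg
        by_contra hle
        push_neg at hle
        have hlen1 : g.length ≤ w₀.length := by
          rw [hw2, hf2 g hg]
          exact len_le _ _ ws w w rfl hle hw1
        have := (hu g hg).length_le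
        omega
      have hagree : ∀ g (hg : g ∈ G),
          (asf g hg).take (m + 1) = (asf g₀ hg₀).take (m + 1) := by
        intro g hg
        refine takeAgree m ws _ _ w u hl (hmlt g hg) (hmlt g₀ hg₀) (hf1 g hg) (hf1 g₀ hg₀)
          (by rw [← hf2 g hg]; exact hu g hg) (by rw [← hf2 g₀ hg₀]; exact hu g₀ hg₀) ?_
        have he : (csApply k w ws ((asf g hg).take m)).length = w₀.length := by
          rw [hw2]
          exact len_eq _ _ ws w (by rw [List.length_take]; have := hmlt g hg; omega) hw1
        omega
      have hlenc' : ((asf g₀ hg₀).take (m + 1)).length = m + 1 := by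
        rw [List.length_take]; have := hmlt g₀ hg₀; omega
      have hkey := ih ((asf g₀ hg₀).take (m + 1))
        (fun g hg => ⟨asf g hg, hf1 g hg, hf2 g hg,
          by rw [← hagree g hg]; exact List.take_prefix _ _⟩)
      have hcm : c.length ≤ m := hw3.length_le
      omega

end Aux4
section Aux5
variable {k : ℕ}

lemma build (hk : 2 ≤ k) (ws : List (List (Option (Fin k)))) (w : List (Fin k))
    (hl : ∀ v ∈ ws, IsLeftVar k v) (m : ℕ) (hm : m + 1 ≤ ws.length) :
    ∀ r, r ≤ m → ∃ F : Finset (List (Fin k)), ↑F ⊆ genTree k w ws ∧ Fr k (2 + r) F ∧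
      ∀ g ∈ F, csApply k w ws (List.replicate (m - r) (⟨0, by omega⟩ : Fin k)) <+: g := by
  have hk0 : 0 < k := by omega
  have hk1 : 1 < k := by omega
  set z : Fin k := ⟨0, hk0⟩ with hz
  set o : Fin k := ⟨1, hk1⟩ with ho
  intro r
  induction r with
  | zero =>
      intro _
      refine ⟨{csApply k w ws (List.replicate (m + 1) z),
               csApply k w ws (List.replicate m z ++ [o])}, ?_, ?_, ?_⟩
      · intro x hx
        simp only [Finset.coe_insert, Finset.coe_singleton, Set.mem_insert_iff,
          Set.mem_singleton_iff] at hx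
        rcases hx with rfl | rfl
        · exact ⟨_, by simp; omega, rfl⟩
        · exact ⟨_, by simp; omega, rfl⟩
      · refine Fr.pair _ _ ?_
        intro he
        have := csApply_inj hl (by simp; omega) (by simp; omega) he
        rw [List.replicate_succ'] at this
        have h2 := List.append_inj_right this (by simp)
        simp [hz, ho, Fin.ext_iff] at h2
      · intro g hg
        have hrep : List.replicate m z <+: List.replicate (m + 1) z := by
          rw [List.replicate_succ']
          exact List.prefix_append _ _
        simp only [Finset.mem_insert, Finset.mem_singleton] at hg
        rcases hg with rfl | rfl
        · simpa using pref' w hrep (by simp; omega)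
        · simpa using pref' w (List.prefix_append _ _) (by simp; omega)
  | succ r ih =>
      intro hr
      obtain ⟨F, hsub, hFr, hpref⟩ := ih (by omega)
      refine ⟨insert (csApply k w ws (List.replicate (m - (r + 1)) z)) F, ?_, ?_, ?_⟩
      · intro x hx
        simp only [Finset.coe_insert, Set.mem_insert_iff] at hx
        rcases hx with rfl | hx
        · exact ⟨_, by simp; omega, rfl⟩
        · exact hsub hx
      · refine Fr.cons (2 + r) (by omega) _ _ hFr ?_
        refine ⟨csApply k w ws (List.replicate (m - r) z), fun g hg => by simpa using hpref g hg, ?_⟩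
        exact len_lt _ _ ws w w hl rfl (by simp; omega) (by simp; omega)
      · intro g hg
        have hrep : List.replicate (m - (r + 1)) z <+: List.replicate (m - r) z := by
          have : m - r = (m - (r + 1)) + 1 := by omega
          rw [this, List.replicate_succ']
          exact List.prefix_append _ _
        simp only [Finset.mem_insert] at hg
        rcases hg with rfl | hg
        · exact List.prefix_rfl
        · exact (pref' w hrep (by simp; omega)).trans (by simpa using hpref g hg)

end Aux5
section Aux6
variable {k : ℕ}

lemma fwd (ws : List (List (Option (Fin k)))) (w : List (Fin k))
    (hl : ∀ v ∈ ws, IsLeftVar k v) {n : ℕ} {F : Finset (List (Fin k))}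
    (hFr : Fr k n F) :
    (∀ u ∈ F, u.length ≤ ws.length) → Fr k n (F.image (csApply k w ws)) := by
  induction hFr with
  | single x =>
      intro _
      simpa using Fr.single (csApply k w ws x)
  | pair x y hxy =>
      intro hlen
      rw [Finset.image_insert, Finset.image_singleton]
      exact Fr.pair _ _ fun he =>
        hxy (csApply_inj hl (hlen x (by simp)) (hlen y (by simp)) he)
  | cons n hn w₀ G hG hwit ih =>
      intro hlen
      rw [Finset.image_insert]
      refine Fr.cons n hn _ _ (ih fun u hu => hlen u (Finset.mem_insert_of_mem hu)) ?_
      obtain ⟨u, hu, hwu⟩ := hwit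
      have hGne : G.Nonempty := by
        rw [← Finset.card_pos, Fr_card hG]; omega
      obtain ⟨g₀, hg₀⟩ := hGne
      have hul : u.length ≤ ws.length :=
        le_trans (hu g₀ hg₀).length_le (hlen g₀ (Finset.mem_insert_of_mem hg₀))
      refine ⟨csApply k w ws u, ?_, ?_⟩
      · intro g' hg'
        obtain ⟨g, hg, rfl⟩ := Finset.mem_image.mp hg'
        exact pref' w (hu g hg) hul
      · exact len_lt w₀ u ws w w hl rfl hwu hul

lemma bwd (ws : List (List (Option (Fin k)))) (w : List (Fin k))
    (hl : ∀ v ∈ ws, IsLeftVar k v) {n : ℕ} {H : Finset (List (Fin k))}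
    (hFr : Fr k n H) :
    ∀ F : Finset (List (Fin k)), (∀ u ∈ F, u.length ≤ ws.length) →
      F.image (csApply k w ws) = H → ∃ m, Fr k m F := by
  induction hFr with
  | single x =>
      intro F hlen himg
      have hinj : Set.InjOn (csApply k w ws) F := fun a ha b hb he =>
        csApply_inj hl (hlen a ha) (hlen b hb) he
      have hcard : F.card = 1 := by
        rw [← Finset.card_image_of_injOn hinj, himg, Finset.card_singleton]
      exact ⟨1, Fr_of_card_one hcard⟩
  | pair x y hxy =>
      intro F hlen himg
      have hinj : Set.InjOn (csApply k w ws) F := fun a ha b hb he =>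
        csApply_inj hl (hlen a ha) (hlen b hb) he
      have hcard : F.card = 2 := by
        rw [← Finset.card_image_of_injOn hinj, himg]
        rw [Finset.card_insert_of_notMem (by simpa using hxy), Finset.card_singleton]
      exact ⟨2, Fr_of_card_two hcard⟩
  | cons n hn w' G hG hwit ih =>
      intro F hlen himg
      have hinj : Set.InjOn (csApply k w ws) F := fun a ha b hb he =>
        csApply_inj hl (hlen a ha) (hlen b hb) he
      obtain ⟨u, hu, hwu⟩ := hwit
      have hw'mem : w' ∈ F.image (csApply k w ws) := by
        rw [himg]; exact Finset.mem_insert_self _ _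
      obtain ⟨w₀, hw₀F, hw₀⟩ := Finset.mem_image.mp hw'mem
      have hw'G : w' ∉ G := fun hmem => absurd (hu w' hmem).length_le (by omega)
      have hG' : (F.erase w₀).image (csApply k w ws) = G := by
        ext x'
        simp only [Finset.mem_image, Finset.mem_erase]
        constructor
        · rintro ⟨a, ⟨hane, haF⟩, rfl⟩
          have hmem : csApply k w ws a ∈ insert w' G := by
            rw [← himg]; exact Finset.mem_image_of_mem _ haF
          rcases Finset.mem_insert.mp hmem with he | hm
          · exact absurd (hinj haF hw₀F (he.trans hw₀.symm)) hane
          · exact hm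
        · intro hx
          have hmem : x' ∈ F.image (csApply k w ws) := by
            rw [himg]; exact Finset.mem_insert_of_mem hx
          obtain ⟨a, haF, rfl⟩ := Finset.mem_image.mp hmem
          refine ⟨a, ⟨?_, haF⟩, rfl⟩
          rintro rfl
          rw [hw₀] at hx
          exact hw'G hx
      obtain ⟨m, hm⟩ := ih (F.erase w₀) (fun u hu' => hlen u (Finset.mem_of_mem_erase hu')) hG'
      have hinjE : Set.InjOn (csApply k w ws) (F.erase w₀) := fun a ha b hb he =>
        hinj (Finset.mem_of_mem_erase ha) (Finset.mem_of_mem_erase hb) he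
      have hmn : m = n := by
        have h1 := Fr_card hm
        have h2 := Fr_card hG
        rw [← hG', Finset.card_image_of_injOn hinjE, h1] at h2
        exact h2
      have hEne : (F.erase w₀).Nonempty := by
        rw [← Finset.card_pos, Fr_card hm]; omega
      obtain ⟨g₀, hg₀⟩ := hEne
      -- every g in the erased set is strictly longer than w₀
      have hglt : ∀ g ∈ F.erase w₀, w₀.length < g.length := by
        intro g hg
        by_contra hle
        push_neg at hle
        have himgg : csApply k w ws g ∈ G := by
          rw [← hG']; exact Finset.mem_image_of_mem _ hg
        have h1 : (csApply k w ws g).length ≤ (csApply k w ws w₀).length :=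
          len_le g w₀ ws w w rfl hle (hlen w₀ hw₀F)
        have h2 := (hu _ himgg).length_le
        rw [hw₀] at h1
        omega
      have hagree : ∀ g ∈ F.erase w₀,
          g.take (w₀.length + 1) = g₀.take (w₀.length + 1) := by
        intro g hg
        have himgg : csApply k w ws g ∈ G := by
          rw [← hG']; exact Finset.mem_image_of_mem _ hg
        have himgg₀ : csApply k w ws g₀ ∈ G := by
          rw [← hG']; exact Finset.mem_image_of_mem _ hg₀
        refine takeAgree w₀.length ws g g₀ w u hl (hglt g hg) (hglt g₀ hg₀)
          (hlen g (Finset.mem_of_mem_erase hg)) (hlen g₀ (Finset.mem_of_mem_erase hg₀))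
          (hu _ himgg) (hu _ himgg₀) ?_
        have he : (csApply k w ws (g.take w₀.length)).length = w'.length := by
          rw [← hw₀]
          exact len_eq _ _ ws w (by rw [List.length_take]; have := hglt g hg; omega)
            (hlen w₀ hw₀F)
        omega
      have hfr : Fr k (m + 1) (insert w₀ (F.erase w₀)) := by
        refine Fr.cons m (by omega) _ _ hm
          ⟨g₀.take (w₀.length + 1), fun g hg => ?_, ?_⟩
        · rw [← hagree g hg]; exact List.take_prefix _ _
        · rw [List.length_take]
          have := hglt g₀ hg₀
          omega
      rw [Finset.insert_erase hw₀F] at hfr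
      exact ⟨m + 1, hfr⟩

end Aux6
/-- Let `W` be a `d`-dimensional Carlson–Simpson tree of `[k]^{<ℕ}`
(`k ≥ 2`, `d ≥ 1`). Then for every `n ≥ 1`, `W` contains a free set of cardinality `n`
iff `n − 1 ≤ d`; moreover, for every `F ⊆ [k]^{<d+1}`, `F` is free iff `I_W(F)` is free,
where `I_W` is the canonical isomorphism. -/
theorem stmt_16 (k d : ℕ) (hk : 2 ≤ k) (hd : 1 ≤ d)
    (w : List (Fin k)) (ws : List (List (Option (Fin k))))
    (hlen : ws.length = d) (hleft : ∀ vw ∈ ws, IsLeftVar k vw) :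
    (∀ n : ℕ, 1 ≤ n →
      ((∃ F : Finset (List (Fin k)), ↑F ⊆ genTree k w ws ∧ Fr k n F) ↔ n - 1 ≤ d)) ∧
    (∀ F : Finset (List (Fin k)), (∀ u ∈ F, u.length ≤ d) →
      ((∃ n, Fr k n F) ↔ ∃ n, Fr k n (F.image (csApply k w ws)))) := by
  constructor
  · intro n hn
    constructor
    · rintro ⟨F, hsub, hFr⟩
      have hkey := key ws w hleft hFr [] ?_
      · simp only [List.length_nil] at hkey
        omega
      · intro g hg
        obtain ⟨as, h1, h2⟩ := hsub hg
        exact ⟨as, h1, h2, List.nil_prefix⟩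
    · intro hnd
      by_cases h1 : n = 1
      · subst h1
        refine ⟨{w}, ?_, Fr.single w⟩
        intro x hx
        simp only [Finset.coe_singleton, Set.mem_singleton_iff] at hx
        subst hx
        exact ⟨[], by simp, (csApply_nil _ _).symm⟩
      · have hn2 : 2 ≤ n := by omega
        obtain ⟨F, hsub, hFr, -⟩ := build hk ws w hleft (n - 2) (by omega) (n - 2) le_rfl
        have he : 2 + (n - 2) = n := by omega
        exact ⟨F, hsub, he ▸ hFr⟩
  · intro F hlenF
    constructor
    · rintro ⟨n, hFr⟩
      exact ⟨n, fwd ws w hleft hFr fun u hu => by rw [hlen]; exact hlenF u hu⟩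
    · rintro ⟨n, hFr⟩
      exact bwd ws w hleft hFr F (fun u hu => by rw [hlen]; exact hlenF u hu) rfl
end

section
/- For every k ≥ 2, every d ≥ m ≥ 1, and every r ≥ 1, the Carlson–Simpson number satisfies CS(k,d,m,r) ≤ GR(k,d+1,m+1,r) − 1, where GR is the Graham–Rothschild-type number for variable words: explicitly, if 𝐰 is an n-dimensional Carlson–Simpson sequence over k with n ≥ GR(k,d+1,m+1,r) − 1, then for every r-coloring of Subseq_m(𝐰) there exists 𝐯 ∈ Subseq_d(𝐰) with Subseq_m(𝐯) monochromatic. -/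
/-- An `m`-variable word over `[k]`: a word over `[k] ∪ {x₀,…,x_{m−1}}` in which every
variable appears and, for `i < j`, all occurrences of `xᵢ` precede all occurrences
of `xⱼ`. -/
def IsMVarWord (k m : ℕ) (u : List (Fin k ⊕ Fin m)) : Prop :=
  (∀ i : Fin m, Sum.inr i ∈ u) ∧
  ∀ p q : ℕ, ∀ i j : Fin m,
    u[p]? = some (Sum.inr i) → u[q]? = some (Sum.inr j) → i < j → p < q

/-- `u` is an `m`-variable subword of the `d`-variable word `y`: `u = y(β₀,…,β_{d−1})`
for some assignment `β` of letters of `[k] ∪ {x₀,…,x_{m−1}}` to the variables of `y`,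
and `u` is an `m`-variable word. -/
def IsSubword (k d m : ℕ) (y : List (Fin k ⊕ Fin d)) (u : List (Fin k ⊕ Fin m)) : Prop :=
  ∃ β : Fin d → (Fin k ⊕ Fin m),
    u = y.map (fun l => match l with | Sum.inl a => Sum.inl a | Sum.inr i => β i) ∧
    IsMVarWord k m u

/-- `N` witnesses the Graham–Rothschild-type property `GR(k,d,m,r)`: for every `n ≥ N`
and every `r`-coloring of the `m`-variable words over `[k]` of length `n` there is a
`d`-variable word `y` of length `n` all of whose `m`-variable subwords get the same
color. -/
def GRProp (k d m r N : ℕ) : Prop :=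
  ∀ n, N ≤ n → ∀ c : List (Fin k ⊕ Fin m) → Fin r,
    ∃ y : List (Fin k ⊕ Fin d), y.length = n ∧ IsMVarWord k d y ∧
      ∀ u u' : List (Fin k ⊕ Fin m), IsSubword k d m y u → IsSubword k d m y u' →
        c u = c u'

/-! ### Auxiliary material for Statement 19 -/

section IdxHelpers
variable {α : Type*} [inst : BEq α] [LawfulBEq α]

theorem myIdx_getElem? {l : List α} {x : α} (h : x ∈ l) : l[l.idxOf x]? = some x := by
  induction l with
  | nil => simp at h
  | cons b t ih =>
    rw [List.idxOf_cons]
    by_cases hb : b = x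
    · simp [hb]
    · have hbx : (b == x) = false := beq_false_of_ne hb
      simp only [hbx, cond_false]
      rcases List.mem_cons.mp h with h' | h'
      · exact absurd h'.symm hb
      · simpa using ih h'

theorem myIdx_min {l : List α} {x : α} {q : ℕ} (h : q < l.idxOf x) : l[q]? ≠ some x := by
  induction l generalizing q with
  | nil => simp
  | cons b t ih =>
    rw [List.idxOf_cons] at h
    by_cases hb : b = x
    · rw [beq_iff_eq.mpr hb, cond_true] at h; omega
    · rw [beq_false_of_ne hb, cond_false] at h
      cases q with
      | zero => simpa using hb
      | succ q => simpa using ih (by omega)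

theorem myIdx_eq {l : List α} {x : α} {p : ℕ} (h1 : l[p]? = some x)
    (h2 : ∀ q < p, l[q]? ≠ some x) : l.idxOf x = p := by
  rcases lt_trichotomy (l.idxOf x) p with h | h | h
  · exact absurd (myIdx_getElem? (List.mem_of_getElem? h1)) (h2 _ h)
  · exact h
  · exact absurd h1 (myIdx_min h)

omit [LawfulBEq α] in
theorem myIdx_le_length (l : List α) (x : α) : l.idxOf x ≤ l.length := by
  induction l with
  | nil => simp
  | cons b t ih =>
    rw [List.idxOf_cons]
    cases b == x
    · simp; omega
    · simp

end IdxHelpers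

theorem substO_none' (k : ℕ) (vw : List (Option (Fin k))) : substO k vw none = vw := by
  unfold substO
  conv_rhs => rw [← List.map_id vw]
  refine List.map_congr_left fun l _ => ?_
  cases l <;> rfl

theorem substO_substO_some (k : ℕ) (vw : List (Option (Fin k))) (b : Fin k)
    (o : Option (Fin k)) : substO k (substO k vw (some b)) o = substO k vw (some b) := by
  unfold substO
  rw [List.map_map]
  refine List.map_congr_left fun l _ => ?_
  cases l <;> rfl

theorem substO_some_ne_none (k : ℕ) (vw : List (Option (Fin k))) (b : Fin k) :
    ∀ x ∈ substO k vw (some b), x ≠ none := by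
  intro x hx
  unfold substO at hx
  rw [List.mem_map] at hx
  obtain ⟨l, -, rfl⟩ := hx
  cases l <;> simp

theorem reduceOption_map_some {α : Type*} {l : List (Option α)} (h : ∀ x ∈ l, x ≠ none) :
    l.reduceOption.map some = l := by
  induction l with
  | nil => rfl
  | cons x t ih =>
    cases x with
    | none => exact absurd rfl (h none (by simp))
    | some b =>
      rw [List.reduceOption_cons_of_some, List.map_cons,
        ih fun x hx => h x (by simp [hx])]

/-- Letter extraction from a word over `[k] ∪ {x₀,…,x_m}`. -/
def exA (k m : ℕ) (u : List (Fin k ⊕ Fin (m+1))) (j : ℕ) : Option (Fin k) :=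
  match u[j]? with
  | some (Sum.inl b) => some b
  | _ => none

/-- Position of the first occurrence of the `i`-th variable. -/
def exNf (k m : ℕ) (u : List (Fin k ⊕ Fin (m+1))) (i : ℕ) : ℕ :=
  @List.idxOf _ instBEqOfDecidableEq (Sum.inr (⟨min i m, by omega⟩ : Fin (m+1))) u

/-- The `v` of the Carlson–Simpson subsequence `𝐰 ⊗ u*`. -/
def exV (k : ℕ) (w : List (Fin k)) (ws : List (List (Option (Fin k)))) {m : ℕ}
    (u : List (Fin k ⊕ Fin (m+1))) : List (Fin k) :=
  w ++ (((List.range (exNf k m u 0)).map fun j =>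
    (substO k (ws.getD j []) (exA k m u j)).reduceOption)).flatten

/-- The `vs` of the Carlson–Simpson subsequence `𝐰 ⊗ u*`. -/
def exVs (k : ℕ) (ws : List (List (Option (Fin k)))) {m : ℕ}
    (u : List (Fin k ⊕ Fin (m+1))) : List (List (Option (Fin k))) :=
  (List.range m).map fun i =>
    ((List.Ico (exNf k m u i) (exNf k m u (i+1))).map fun j =>
      substO k (ws.getD j []) (exA k m u j)).flatten

section mvar
variable {k m : ℕ} {u : List (Fin k ⊕ Fin (m+1))}

theorem exA_inl {p : ℕ} {b : Fin k} (h : u[p]? = some (Sum.inl b)) :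
    exA k m u p = some b := by unfold exA; rw [h]

theorem exA_inr {p : ℕ} {j : Fin (m+1)} (h : u[p]? = some (Sum.inr j)) :
    exA k m u p = none := by unfold exA; rw [h]

theorem exNf_eq {i : ℕ} (hi : i ≤ m) :
    exNf k m u i
      = @List.idxOf _ instBEqOfDecidableEq (Sum.inr (⟨i, by omega⟩ : Fin (m+1))) u := by
  unfold exNf
  congr 2
  exact Fin.ext (Nat.min_eq_left hi)

theorem exNf_le_length (i : ℕ) : exNf k m u i ≤ u.length := by
  unfold exNf
  exact myIdx_le_length (inst := instBEqOfDecidableEq) u _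

theorem exNf_spec (hu : IsMVarWord k (m+1) u) {i : ℕ} (hi : i ≤ m) :
    u[exNf k m u i]? = some (Sum.inr (⟨i, by omega⟩ : Fin (m+1))) := by
  rw [exNf_eq hi]
  exact myIdx_getElem? (inst := instBEqOfDecidableEq) (hu.1 _)

theorem exNf_min {i : ℕ} (hi : i ≤ m) {q : ℕ} (hq : q < exNf k m u i) :
    u[q]? ≠ some (Sum.inr (⟨i, by omega⟩ : Fin (m+1))) := by
  rw [exNf_eq hi] at hq
  exact myIdx_min (inst := instBEqOfDecidableEq) hq

theorem getElem?_some_lt {α : Type*} {l : List α} {n : ℕ} {x : α} (h : l[n]? = some x) :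
    n < l.length := by
  obtain ⟨h1, -⟩ := List.getElem?_eq_some_iff.mp h
  exact h1

theorem exNf_lt_length (hu : IsMVarWord k (m+1) u) {i : ℕ} (hi : i ≤ m) :
    exNf k m u i < u.length :=
  getElem?_some_lt (exNf_spec hu hi)

theorem exNf_strictMono (hu : IsMVarWord k (m+1) u) :
    StrictMonoOn (exNf k m u) (Set.Iic m) := by
  intro i hi j hj hij
  simp only [Set.mem_Iic] at hi hj
  exact hu.2 _ _ _ _ (exNf_spec hu hi) (exNf_spec hu hj) (by simpa [Fin.lt_def] using hij)

theorem exNf_mono (hu : IsMVarWord k (m+1) u) {i j : ℕ} (hij : i ≤ j) (hj : j ≤ m) :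
    exNf k m u i ≤ exNf k m u j :=
  (exNf_strictMono hu).monotoneOn (Set.mem_Iic.mpr (hij.trans hj)) (Set.mem_Iic.mpr hj) hij

theorem occ_lower {p : ℕ} {j : Fin (m+1)}
    (h : u[p]? = some (Sum.inr j)) : exNf k m u ↑j ≤ p := by
  by_contra hc
  push_neg at hc
  exact exNf_min (Nat.lt_succ_iff.mp j.isLt) hc (by simpa [Fin.eta] using h)

theorem occ_upper (hu : IsMVarWord k (m+1) u) {p : ℕ} {j : Fin (m+1)}
    (h : u[p]? = some (Sum.inr j)) (hj : ↑j < m) : p < exNf k m u (↑j + 1) := by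
  refine hu.2 _ _ _ _ h (exNf_spec hu (by omega)) ?_
  simp [Fin.lt_def]

theorem exA_ne_none_of_lt (hu : IsMVarWord k (m+1) u) {p : ℕ} (hp : p < exNf k m u 0) :
    exA k m u p ≠ none := by
  have hplen : p < u.length := hp.trans_le (exNf_lt_length hu (Nat.zero_le m)).le
  intro hnone
  cases hl : u[p] with
  | inl b =>
    exact absurd ((exA_inl (by rw [List.getElem?_eq_getElem hplen, hl])).symm.trans hnone)
      (by simp)
  | inr j =>
    have hocc : u[p]? = some (Sum.inr j) := by rw [List.getElem?_eq_getElem hplen, hl]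
    have h1 : exNf k m u ↑j ≤ p := occ_lower hocc
    have h2 : exNf k m u 0 ≤ exNf k m u ↑j :=
      exNf_mono hu (Nat.zero_le _) (Nat.lt_succ_iff.mp j.isLt)
    omega

theorem exA_exNf (hu : IsMVarWord k (m+1) u) {i : ℕ} (hi : i ≤ m) :
    exA k m u (exNf k m u i) = none :=
  exA_inr (exNf_spec hu hi)

theorem exV_map_some (hu : IsMVarWord k (m+1) u) (w : List (Fin k))
    (ws : List (List (Option (Fin k)))) :
    (exV k w ws u).map some = w.map some ++
      ((List.range (exNf k m u 0)).map fun j =>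
        substO k (ws.getD j []) (exA k m u j)).flatten := by
  unfold exV
  rw [List.map_append, List.map_flatten, List.map_map]
  congr 1
  refine congrArg List.flatten (List.map_congr_left fun j hj => ?_)
  rw [List.mem_range] at hj
  obtain ⟨b, hb⟩ := Option.ne_none_iff_exists'.mp (exA_ne_none_of_lt hu hj)
  simp only [Function.comp_apply, hb]
  exact reduceOption_map_some (substO_some_ne_none k _ b)

theorem exVs_length (ws : List (List (Option (Fin k)))) : (exVs k ws u).length = m := by
  simp [exVs]

theorem exVs_getD (ws : List (List (Option (Fin k)))) {i : ℕ} (hi : i < m) :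
    (exVs k ws u).getD i [] =
      ((List.Ico (exNf k m u i) (exNf k m u (i+1))).map fun j =>
        substO k (ws.getD j []) (exA k m u j)).flatten := by
  unfold exVs
  rw [List.getD_eq_getElem _ _ (by simpa using hi)]
  simp

/-- Soundness: the extracted pair is a Carlson–Simpson subsequence of `(w, ws)`. -/
theorem exSound (hu : IsMVarWord k (m+1) u) (w : List (Fin k))
    (ws : List (List (Option (Fin k)))) (hlen : u.length ≤ ws.length + 1) :
    IsCSSubseq k w ws (exV k w ws u) (exVs k ws u) := by
  unfold IsCSSubseq
  rw [exVs_length ws]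
  refine ⟨exA k m u, exNf k m u, exNf_strictMono hu, ?_, ?_, ?_, ?_, ?_⟩
  · have := exNf_lt_length hu (le_refl m); omega
  · exact fun i hi => exA_exNf hu hi.le
  · exact fun j hj => exA_ne_none_of_lt hu hj
  · exact exV_map_some hu w ws
  · exact fun i hi => exVs_getD ws hi

end mvar

theorem chain_le (NF : ℕ → ℕ) {s t : ℕ} (h : s ≤ t)
    (hm : ∀ i, s ≤ i → i < t → NF i ≤ NF (i+1)) : NF s ≤ NF t := by
  induction t, h using Nat.le_induction with
  | base => exact le_rfl
  | succ t ht ih =>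
    exact (ih fun i hi hit => hm i hi (by omega)).trans (hm t ht (by omega))

theorem flatten_telescope {α : Type*} (g : ℕ → List α) (NF : ℕ → ℕ) (s n : ℕ)
    (hm : ∀ i, s ≤ i → i < s + n → NF i ≤ NF (i+1)) :
    ((List.Ico s (s+n)).map fun j => ((List.Ico (NF j) (NF (j+1))).map g).flatten).flatten
      = ((List.Ico (NF s) (NF (s+n))).map g).flatten := by
  induction n with
  | zero => simp [List.Ico.self_empty]
  | succ n ih =>
    have h1 : s ≤ s + n := by omega
    have h2 : NF s ≤ NF (s+n) := chain_le NF h1 fun i hi hit => hm i hi (by omega)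
    have h3 : NF (s+n) ≤ NF (s+n+1) := hm (s+n) h1 (by omega)
    rw [show s + (n+1) = (s+n)+1 by omega,
      ← List.Ico.append_consecutive h1 (by omega : s+n ≤ (s+n)+1), List.Ico.succ_singleton,
      List.map_append, List.flatten_append, ih (fun i hi hit => hm i hi (by omega)),
      ← List.Ico.append_consecutive h2 h3, List.map_append, List.flatten_append]
    simp

/-- Composition: every `m`-dimensional CS subsequence of the extraction of a
`(d+1)`-variable word `y` is the extraction of an `(m+1)`-variable subword of `y`. -/
theorem exCompose {k d m : ℕ} {y : List (Fin k ⊕ Fin (d+1))} (hy : IsMVarWord k (d+1) y)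
    (w : List (Fin k)) (ws : List (List (Option (Fin k))))
    {z : List (Fin k)} {zs : List (List (Option (Fin k)))} (hzs : zs.length = m)
    (h : IsCSSubseq k (exV k w ws y) (exVs k ws y) z zs) :
    ∃ u : List (Fin k ⊕ Fin (m+1)), IsSubword k (d+1) (m+1) y u ∧
      exV k w ws u = z ∧ exVs k ws u = zs := by
  obtain ⟨a, nf, hmono, hle, hnone, hpre, hv, hvs⟩ := h
  rw [hzs, exVs_length ws] at hle
  rw [hzs] at hmono hnone hvs
  -- basic monotonicity facts
  have hnfmono : ∀ t t', t ≤ t' → t' ≤ m → nf t ≤ nf t' := fun t t' h1 h2 =>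
    hmono.monotoneOn (Set.mem_Iic.mpr (h1.trans h2)) (Set.mem_Iic.mpr h2) h1
  have hnfstrict : ∀ t t', t < t' → t' ≤ m → nf t < nf t' := fun t t' h1 h2 =>
    hmono (Set.mem_Iic.mpr ((le_of_lt h1).trans h2)) (Set.mem_Iic.mpr h2) h1
  have hNFmono : ∀ i j, i ≤ j → j ≤ d → exNf k d y i ≤ exNf k d y j := fun i j h1 h2 =>
    exNf_mono hy h1 h2
  -- the substitution
  set β : Fin (d+1) → Fin k ⊕ Fin (m+1) := fun j =>
    if (j : ℕ) < nf m then
      match a (j : ℕ) with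
      | some b => Sum.inl b
      | none => Sum.inr (⟨Nat.findGreatest (fun t => nf t ≤ (j : ℕ)) m,
          Nat.lt_succ_of_le (Nat.findGreatest_le m)⟩ : Fin (m+1))
    else Sum.inr (Fin.last m) with hβ
  set u : List (Fin k ⊕ Fin (m+1)) :=
    y.map (fun l => match l with | Sum.inl a => Sum.inl a | Sum.inr i => β i) with hu_def
  have hup : ∀ (p : ℕ) (l : Fin k ⊕ Fin (d+1)), y[p]? = some l →
      u[p]? = some (match l with | Sum.inl b => Sum.inl b | Sum.inr i => β i) := by
    intro p l hl
    rw [hu_def, List.getElem?_map, hl, Option.map_some]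
  -- block identification for the find-greatest
  have hblk : ∀ j, nf 0 ≤ j → j < nf m →
      Nat.findGreatest (fun t => nf t ≤ j) m < m ∧
      nf (Nat.findGreatest (fun t => nf t ≤ j) m) ≤ j ∧
      j < nf (Nat.findGreatest (fun t => nf t ≤ j) m + 1) := by
    intro j h0 hj
    have hBle : Nat.findGreatest (fun t => nf t ≤ j) m ≤ m := Nat.findGreatest_le m
    have hBspec : nf (Nat.findGreatest (fun t => nf t ≤ j) m) ≤ j :=
      Nat.findGreatest_spec (P := fun t => nf t ≤ j) (Nat.zero_le m) h0
    have hBm : Nat.findGreatest (fun t => nf t ≤ j) m < m := by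
      rcases Nat.lt_or_ge (Nat.findGreatest (fun t => nf t ≤ j) m) m with h' | h'
      · exact h'
      · have heq : Nat.findGreatest (fun t => nf t ≤ j) m = m := le_antisymm hBle h'
        rw [heq] at hBspec; omega
    have hgr : ¬ nf (Nat.findGreatest (fun t => nf t ≤ j) m + 1) ≤ j :=
      Nat.findGreatest_is_greatest (P := fun t => nf t ≤ j) (lt_add_one _) (by omega)
    exact ⟨hBm, hBspec, by omega⟩
  have hblk_eq : ∀ t j, t < m → nf t ≤ j → j < nf (t+1) →
      Nat.findGreatest (fun t' => nf t' ≤ j) m = t := by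
    intro t j ht h1 h2
    refine le_antisymm ?_ (Nat.le_findGreatest (P := fun t' => nf t' ≤ j) (by omega) h1)
    by_contra hc
    push_neg at hc
    have hBle : Nat.findGreatest (fun t' => nf t' ≤ j) m ≤ m := Nat.findGreatest_le m
    have hBspec : nf (Nat.findGreatest (fun t' => nf t' ≤ j) m) ≤ j :=
      Nat.findGreatest_spec (P := fun t' => nf t' ≤ j) (by omega : t ≤ m) h1
    have : nf (t+1) ≤ nf (Nat.findGreatest (fun t' => nf t' ≤ j) m) :=
      hnfmono _ _ (by omega) hBle
    omega
  -- characterization of variable letters of β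
  have hβ_inr : ∀ (j : Fin (d+1)) (i : Fin (m+1)), β j = Sum.inr i →
      nf (i : ℕ) ≤ (j : ℕ) ∧ ((i : ℕ) < m → (j : ℕ) < nf ((i : ℕ) + 1)) := by
    intro j i hji
    simp only [hβ] at hji
    by_cases hj : (j : ℕ) < nf m
    · rw [if_pos hj] at hji
      cases ha : a (j : ℕ) with
      | some b => rw [ha] at hji; exact absurd hji (by simp)
      | none =>
        rw [ha] at hji
        have h0 : nf 0 ≤ (j : ℕ) := by
          by_contra hc; push_neg at hc; exact hpre _ hc ha
        obtain ⟨hBm, hB1, hB2⟩ := hblk _ h0 hj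
        have hiv : (i : ℕ) = Nat.findGreatest (fun t => nf t ≤ (j : ℕ)) m := by
          have h2 := Sum.inr.inj hji
          exact (congrArg Fin.val h2).symm
        exact ⟨by rw [hiv]; exact hB1, fun _ => by rw [hiv]; exact hB2⟩
    · rw [if_neg hj] at hji
      have hiv : (i : ℕ) = m := by
        have h2 := Sum.inr.inj hji
        exact (congrArg Fin.val h2).symm
      refine ⟨by rw [hiv]; omega, fun h' => by rw [hiv] at h'; omega⟩
  -- u at the first occurrences
  have hu_at : ∀ t (ht : t ≤ m), u[exNf k d y (nf t)]? =
      some (Sum.inr (⟨t, by omega⟩ : Fin (m+1))) := by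
    intro t ht
    have hnftd : nf t ≤ d := le_trans (hnfmono t m ht le_rfl) hle
    have hyNF : y[exNf k d y (nf t)]? =
        some (Sum.inr (⟨nf t, by omega⟩ : Fin (d+1))) := exNf_spec hy hnftd
    have hthis := hup _ _ hyNF
    rw [hthis]
    congr 1
    show β ⟨nf t, by omega⟩ = _
    rcases Nat.lt_or_ge t m with htm | htm
    · have h1 : nf t < nf m := hnfstrict t m htm le_rfl
      simp only [hβ]
      rw [if_pos (show ((⟨nf t, by omega⟩ : Fin (d+1)) : ℕ) < nf m from h1)]
      have hblkt := hblk_eq t (nf t) htm le_rfl (hnfstrict t (t+1) (by omega) (by omega))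
      show (match a (nf t) with
        | some b => Sum.inl b
        | none => Sum.inr (⟨Nat.findGreatest (fun t' => nf t' ≤ nf t) m,
            Nat.lt_succ_of_le (Nat.findGreatest_le m)⟩ : Fin (m+1))) = _
      rw [hnone t htm]
      exact congrArg Sum.inr (Fin.ext hblkt)
    · have htm' : t = m := le_antisymm ht htm
      simp only [hβ]
      rw [if_neg (show ¬ ((⟨nf t, by omega⟩ : Fin (d+1)) : ℕ) < nf m by
        show ¬ nf t < nf m; rw [htm']; exact lt_irrefl _)]
      exact congrArg Sum.inr (Fin.ext (by simpa using htm'.symm))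
  -- minimality of first occurrences in u
  have hu_min : ∀ t (ht : t ≤ m), ∀ q, q < exNf k d y (nf t) →
      u[q]? ≠ some (Sum.inr (⟨t, by omega⟩ : Fin (m+1))) := by
    intro t ht q hq hqe
    have hql : q < y.length := by
      have := exNf_le_length (k := k) (m := d) (u := y) (nf t); omega
    have hyq : y[q]? = some y[q] := List.getElem?_eq_getElem hql
    have huq := hup _ _ hyq
    rw [huq] at hqe
    cases hl : y[q] with
    | inl b => rw [hl] at hqe; exact absurd hqe (by simp)
    | inr j =>
      rw [hl] at hqe
      have hβj : β j = Sum.inr (⟨t, by omega⟩ : Fin (m+1)) := by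
        simpa using hqe
      obtain ⟨h1, -⟩ := hβ_inr j _ hβj
      have h2 : exNf k d y (nf t) ≤ exNf k d y (j : ℕ) :=
        hNFmono _ _ (by simpa using h1) (by omega)
      have h3 : exNf k d y (j : ℕ) ≤ q := occ_lower (by rw [hyq, hl])
      omega
  -- the first-occurrence function of u
  have hexNf_u : ∀ t, t ≤ m → exNf k m u t = exNf k d y (nf t) := by
    intro t ht
    rw [exNf_eq ht]
    exact myIdx_eq (inst := instBEqOfDecidableEq) (hu_at t ht) (hu_min t ht)
  -- u is an (m+1)-variable word
  have hu_mvar : IsMVarWord k (m+1) u := by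
    constructor
    · intro i
      have h1 := hu_at (i : ℕ) (by omega)
      have h2 : u[exNf k d y (nf (i : ℕ))]? = some (Sum.inr i) := by
        rw [h1]
      exact List.mem_of_getElem? h2
    · intro p q i j hp hq hij
      have hpl : p < u.length := getElem?_some_lt hp
      have hql : q < u.length := getElem?_some_lt hq
      have hpl' : p < y.length := by rwa [hu_def, List.length_map] at hpl
      have hql' : q < y.length := by rwa [hu_def, List.length_map] at hql
      have hyp : y[p]? = some y[p] := List.getElem?_eq_getElem hpl'
      have hyq : y[q]? = some y[q] := List.getElem?_eq_getElem hql'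
      have hup' := hup _ _ hyp
      have huq' := hup _ _ hyq
      rw [hup'] at hp; rw [huq'] at hq
      cases hlp : y[p] with
      | inl b => rw [hlp] at hp; exact absurd hp.symm (by simp)
      | inr jp =>
        cases hlq : y[q] with
        | inl b => rw [hlq] at hq; exact absurd hq.symm (by simp)
        | inr jq =>
          rw [hlp] at hp; rw [hlq] at hq
          have hβp : β jp = Sum.inr i := by simpa using hp
          have hβq : β jq = Sum.inr j := by simpa using hq
          obtain ⟨hp1, hp2⟩ := hβ_inr jp i hβp
          obtain ⟨hq1, -⟩ := hβ_inr jq j hβq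
          have him : (i : ℕ) < m := by
            have : (i : ℕ) < (j : ℕ) := hij
            have := j.isLt; omega
          have hjplt : (jp : ℕ) < (jq : ℕ) := by
            have h2 := hp2 him
            have h3 : nf ((i : ℕ) + 1) ≤ nf (j : ℕ) :=
              hnfmono _ _ (by omega) (by have := j.isLt; omega)
            omega
          exact hy.2 p q jp jq (by rw [hyp, hlp]) (by rw [hyq, hlq]) hjplt
  -- Claim C : pointwise identification of substitutions
  have claimC : ∀ j p, j < nf m → exNf k d y j ≤ p → p < exNf k d y (j+1) →
      substO k (substO k (ws.getD p []) (exA k d y p)) (a j)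
        = substO k (ws.getD p []) (exA k m u p) := by
    intro j p hj hp1 hp2
    have hjd : j + 1 ≤ d := by omega
    have hpl : p < y.length := by
      have := exNf_le_length (k := k) (m := d) (u := y) (j+1); omega
    have hyp : y[p]? = some y[p] := List.getElem?_eq_getElem hpl
    cases hl : y[p] with
    | inl b =>
      have hA : exA k d y p = some b := exA_inl (by rw [hyp, hl])
      have hA' : exA k m u p = some b := exA_inl (by rw [hup _ _ (by rw [hyp, hl])])
      rw [hA, hA', substO_substO_some]
    | inr i =>
      have hyp' : y[p]? = some (Sum.inr i) := by rw [hyp, hl]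
      -- identify the block
      have hij : (i : ℕ) = j := by
        have h1 : exNf k d y (i : ℕ) ≤ p := occ_lower hyp'
        rcases lt_trichotomy (i : ℕ) j with h' | h' | h'
        · have h2 : p < exNf k d y ((i : ℕ) + 1) := occ_upper hy hyp' (by omega)
          have h3 : exNf k d y ((i : ℕ) + 1) ≤ exNf k d y j := hNFmono _ _ (by omega) (by omega)
          omega
        · exact h'
        · have h2 : exNf k d y (j+1) ≤ exNf k d y (i : ℕ) :=
            hNFmono _ _ (by omega) (by have := i.isLt; omega)
          omega
      have hA : exA k d y p = none := exA_inr hyp'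
      have hupβ : u[p]? = some (β i) := by
        have := hup _ _ hyp'
        simpa using this
      rw [hA, substO_none']
      simp only [hβ] at hupβ
      rw [hij] at hupβ
      rw [if_pos hj] at hupβ
      cases ha : a j with
      | some b =>
        rw [ha] at hupβ
        have hA' : exA k m u p = some b := exA_inl hupβ
        rw [hA']
      | none =>
        rw [ha] at hupβ
        have hA' : exA k m u p = none := exA_inr hupβ
        rw [hA']
  -- letters before the first variable agree
  have hfirst : ∀ p, p < exNf k d y 0 →
      substO k (ws.getD p []) (exA k d y p) = substO k (ws.getD p []) (exA k m u p) := by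
    intro p hp
    have hpl : p < y.length := by
      have := exNf_lt_length hy (Nat.zero_le d); omega
    have hyp : y[p]? = some y[p] := List.getElem?_eq_getElem hpl
    cases hl : y[p] with
    | inl b =>
      have hA : exA k d y p = some b := exA_inl (by rw [hyp, hl])
      have hA' : exA k m u p = some b := exA_inl (by rw [hup _ _ (by rw [hyp, hl])])
      rw [hA, hA']
    | inr i =>
      exfalso
      have h1 : exNf k d y (i : ℕ) ≤ p := occ_lower (by rw [hyp, hl])
      have h2 : exNf k d y 0 ≤ exNf k d y (i : ℕ) :=
        hNFmono _ _ (Nat.zero_le _) (by have := i.isLt; omega)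
      omega
  -- the block decomposition of vs entries of y
  have hblock : ∀ j, j < nf m →
      substO k ((exVs k ws y).getD j []) (a j)
        = ((List.Ico (exNf k d y j) (exNf k d y (j+1))).map fun p =>
            substO k (ws.getD p []) (exA k m u p)).flatten := by
    intro j hj
    rw [exVs_getD ws (by omega : j < d)]
    show List.map _ _ = _
    rw [List.map_flatten, List.map_map]
    congr 1
    refine List.map_congr_left fun p hp => ?_
    rw [List.Ico.mem] at hp
    exact claimC j p hj hp.1 hp.2
  -- telescoping for an interval of blocks
  have htel : ∀ s t, s ≤ t → t ≤ m →
      ((List.Ico (nf s) (nf t)).map fun j => substO k ((exVs k ws y).getD j []) (a j)).flatten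
        = ((List.Ico (exNf k d y (nf s)) (exNf k d y (nf t))).map fun p =>
            substO k (ws.getD p []) (exA k m u p)).flatten := by
    intro s t hst htm
    have hst' : nf s ≤ nf t := hnfmono s t hst htm
    have htmnf : nf t ≤ nf m := hnfmono t m htm le_rfl
    rw [show nf t = nf s + (nf t - nf s) by omega]
    rw [← flatten_telescope (fun p => substO k (ws.getD p []) (exA k m u p))
      (exNf k d y) (nf s) (nf t - nf s)
      (fun i hi hit => hNFmono i (i+1) (by omega) (by omega))]
    congr 1
    refine List.map_congr_left fun j hj => ?_
    rw [List.Ico.mem] at hj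
    exact hblock j (by omega)
  refine ⟨u, ⟨β, ?_, hu_mvar⟩, ?_, ?_⟩
  · rw [hu_def]
    refine List.map_congr_left fun l _ => ?_
    cases l <;> rfl
  -- z agrees
  · have h0m : (0 : ℕ) ≤ m := Nat.zero_le m
    have key : z.map some = (exV k w ws u).map some := by
      rw [hv, exV_map_some hy w ws, exV_map_some hu_mvar w ws, hexNf_u 0 h0m]
      rw [← List.Ico.zero_bot (nf 0), ← List.Ico.zero_bot (exNf k d y 0),
        ← List.Ico.zero_bot (exNf k d y (nf 0))]
      have e1 : ((List.Ico 0 (exNf k d y 0)).map fun p =>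
          substO k (ws.getD p []) (exA k d y p)).flatten
          = ((List.Ico 0 (exNf k d y 0)).map fun p =>
            substO k (ws.getD p []) (exA k m u p)).flatten := by
        congr 1
        refine List.map_congr_left fun p hp => ?_
        rw [List.Ico.mem] at hp
        exact hfirst p hp.2
      -- rewrite the middle flatten
      have e3 : ((List.Ico 0 (nf 0)).map fun j =>
          substO k ((exVs k ws y).getD j []) (a j)).flatten
          = ((List.Ico (exNf k d y 0) (exNf k d y (nf 0))).map fun p =>
            substO k (ws.getD p []) (exA k m u p)).flatten := by
        have h0nf : nf 0 ≤ nf m := hnfmono 0 m (Nat.zero_le m) le_rfl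
        rw [show (List.Ico 0 (nf 0)) = (List.Ico 0 (0 + nf 0)) by rw [Nat.zero_add],
          show exNf k d y (nf 0) = exNf k d y (0 + nf 0) by rw [Nat.zero_add],
          ← flatten_telescope (fun p => substO k (ws.getD p []) (exA k m u p))
            (exNf k d y) 0 (nf 0)
            (fun i hi hit => hNFmono i (i+1) (by omega) (by omega))]
        congr 1
        refine List.map_congr_left fun j hj => ?_
        rw [List.Ico.mem] at hj
        exact hblock j (by omega)
      rw [e3, e1, List.append_assoc, ← List.flatten_append, ← List.map_append,
        List.Ico.append_consecutive (Nat.zero_le _)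
          (hNFmono 0 (nf 0) (Nat.zero_le _)
            (le_trans (hnfmono 0 m (Nat.zero_le m) le_rfl) hle))]
    exact (List.map_injective_iff.mpr (Option.some_injective _) key).symm
  -- zs agrees
  · refine List.ext_getElem (by rw [exVs_length ws, hzs]) fun t h1 h2 => ?_
    have htm : t < m := by rwa [exVs_length ws] at h1
    have lhs : (exVs k ws u)[t] = (exVs k ws u).getD t [] :=
      (List.getD_eq_getElem _ _ h1).symm
    have rhs : zs[t] = zs.getD t [] := (List.getD_eq_getElem _ _ h2).symm
    rw [lhs, rhs, exVs_getD ws htm, hvs t htm, hexNf_u t htm.le, hexNf_u (t+1) htm,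
      htel t (t+1) (by omega) htm]

/-- `CS(k,d,m,r) ≤ GR(k,d+1,m+1,r) − 1`: if `N` has the
`GR(k,d+1,m+1,r)` property and `𝐰 = (w, ws)` is an `n`-dimensional Carlson–Simpson
sequence over `k` with `n ≥ N − 1`, then for every `r`-coloring of `Subseq_m(𝐰)` there
exists `𝐯 ∈ Subseq_d(𝐰)` such that `Subseq_m(𝐯)` is monochromatic. -/
theorem stmt_19 (k d m r N : ℕ) (hk : 2 ≤ k) (hm : 1 ≤ m) (hdm : m ≤ d) (hr : 1 ≤ r)
    (hGR : GRProp k (d + 1) (m + 1) r N)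
    (w : List (Fin k)) (ws : List (List (Option (Fin k))))
    (hleft : ∀ vw ∈ ws, IsLeftVar k vw) (hn : N - 1 ≤ ws.length)
    (c : List (Fin k) × List (List (Option (Fin k))) → Fin r) :
    ∃ (v : List (Fin k)) (vs : List (List (Option (Fin k)))),
      vs.length = d ∧ IsCSSubseq k w ws v vs ∧
      ∀ (z z' : List (Fin k)) (zs zs' : List (List (Option (Fin k)))),
        zs.length = m → zs'.length = m →
        IsCSSubseq k v vs z zs → IsCSSubseq k v vs z' zs' →
        c (z, zs) = c (z', zs') := by
  classical
  set n := ws.length + 1 with hn_def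
  have hNn : N ≤ n := by omega
  obtain ⟨y, hylen, hymvar, hmc⟩ := hGR n hNn (fun u => c (exV k w ws u, exVs k ws u))
  have hylen' : y.length ≤ ws.length + 1 := by omega
  refine ⟨exV k w ws y, exVs k ws y, exVs_length ws, exSound hymvar w ws hylen', ?_⟩
  intro z z' zs zs' hzsl hzsl' h1 h2
  obtain ⟨u, hsub, hz, hzsu⟩ := exCompose hymvar w ws hzsl h1
  obtain ⟨u', hsub', hz', hzsu'⟩ := exCompose hymvar w ws hzsl' h2
  have := hmc u u' hsub hsub'
  simpa [hz, hzsu, hz', hzsu'] using this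
end
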